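/- arXiv:2409.18670 — 5 statements merged into one kernel-verified Lean document; each statement's English description precedes it below -/
import Mathlib

section
/- Let C=(S,P) be a countable Markov chain, R ⊆ S a set such that from every state s the probability of eventually reaching R is positive, and L : S → ℝ≥0 a function such that (1) for every n ∈ ℕ the set L⁻¹([0,n]) is finite, and (2) for every s ∉ R, the expected value ∑_{s'} P(s,s')·L(s') ≤ L(s). Then from every state s, the probability of eventually reaching R equals 1 (i.e., R is an attractor). -/
open scoped ENNReal NNReal BigOperators
open Filter

noncomputable section

variable {S : Type*}

/-- Probability of following a finite path (list of successive states). -/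
def pathProb (P : S → S → ℝ≥0∞) : List S → ℝ≥0∞
  | [] => 1
  | [_] => 1
  | a :: b :: l => P a b * pathProb P (b :: l)

/-- `l` is a finite path starting at `s` that visits `T` for the first time
at its last element. -/
def FirstHitPath (T : Set S) (s : S) (l : List S) : Prop :=
  l.head? = some s ∧ ∃ h : l ≠ [], l.getLast h ∈ T ∧
    ∀ i : Fin l.length, (i : ℕ) + 1 < l.length → l.get i ∉ T

/-- Probability of eventually reaching `T` from `s`. -/
def reachProb (P : S → S → ℝ≥0∞) (T : Set S) (s : S) : ℝ≥0∞ :=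
  ∑' l : {l : List S // FirstHitPath T s l}, pathProb P (l : List S)

/-- The avoid set: states from which `T` is unreachable. -/
def Av (P : S → S → ℝ≥0∞) (T : Set S) : Set S := {s | reachProb P T s = 0}

/-- Probability that, starting from `s`, the chain stays outside `R`
during its first `n` steps (i.e. the hitting time of `R` is `> n`). -/
def surviveProb (P : S → S → ℝ≥0∞) (R : Set S) (s : S) (n : ℕ) : ℝ≥0∞ :=
  ∑' l : {l : List S // l.length = n + 1 ∧ l.head? = some s ∧ ∀ x ∈ l, x ∉ R},
    pathProb P (l : List S)

/-- Expected hitting time of `R` from `s`, via `E τ = ∑_{n≥0} Pr(τ > n)`. -/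
def expHittingTime (P : S → S → ℝ≥0∞) (R : Set S) (s : S) : ℝ≥0∞ :=
  ∑' n : ℕ, surviveProb P R s n

/-- Probability that `X_i ∈ A` for all `i ≥ m`, starting from `s`
(as the infimum over finite horizons). -/
def confineProb (P : S → S → ℝ≥0∞) (A : Set S) (s : S) (m : ℕ) : ℝ≥0∞ :=
  ⨅ n : ℕ, ∑' l : {l : List S // l.length = n + 1 ∧ l.head? = some s ∧
      ∀ i : Fin l.length, m ≤ (i : ℕ) → l.get i ∈ A}, pathProb P (l : List S)

/-- Expected reward collected at the first visit of `T`. -/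
def expReward (P : S → S → ℝ≥0∞) (L : List S → ℝ≥0∞) (T : Set S) (s : S) : ℝ≥0∞ :=
  ∑' l : {l : List S // FirstHitPath T s l}, L l * pathProb P (l : List S)

/-- `P` is a stochastic matrix. -/
def IsStochastic (P : S → S → ℝ≥0∞) : Prop := ∀ s, ∑' s', P s s' = 1

/-- States of the biased chain other than `s₋`. -/
abbrev SA (P : S → S → ℝ≥0∞) (F : Set S) := {s : S // s ∉ Av P F}

/-- `P'` (on `(S ∖ Av(F)) ⊎ {s₋}`, with `none = s₋`) is a biased Markov chain
of `(C, T, F)`. -/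
def IsBiased (P : S → S → ℝ≥0∞) (T F : Set S)
    (P' : Option (SA P F) → Option (SA P F) → ℝ≥0∞) : Prop :=
  IsStochastic P' ∧
  P' none none = 1 ∧
  (∀ s : SA P F, s.val ∈ T → P' (some s) (some s) = 1) ∧
  (∀ s s' : SA P F, 0 < P s.val s'.val → 0 < P' (some s) (some s'))

/-- `(C^•, F^•)` together with `α` is an abstraction of `(C, F)`. -/
def IsAbstraction (P : S → S → ℝ≥0∞) (F : Set S)
    {S' : Type*} (P' : S' → S' → ℝ≥0∞) (F' : Set S')
    (α : SA P F → S') : Prop :=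
  (∀ s : SA P F, s.val ∈ F → α s ∈ F') ∧
  (∀ s : SA P F, s.val ∉ F →
    ∑' s' : SA P F, P s.val s'.val * reachProb P' F' (α s')
      ≤ reachProb P' F' (α s))

/-- The decreasing ratio `h(s)` of an abstraction. -/
def hRatio (P : S → S → ℝ≥0∞) (F : Set S)
    {S' : Type*} (P' : S' → S' → ℝ≥0∞) (F' : Set S')
    (α : SA P F → S') (s : SA P F) : ℝ≥0∞ :=
  (∑' s' : SA P F, P s.val s'.val * reachProb P' F' (α s'))
    / reachProb P' F' (α s)

/-- The biased Markov chain constructed from an abstraction. -/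
def biasedKernel (P : S → S → ℝ≥0∞) (F : Set S)
    {S' : Type*} (P' : S' → S' → ℝ≥0∞) (F' : Set S')
    (α : SA P F → S') :
    Option (SA P F) → Option (SA P F) → ℝ≥0∞
  | none, none => 1
  | none, some _ => 0
  | some s, none => 1 - hRatio P F P' F' α s
  | some s, some s' =>
      P s.val s'.val * reachProb P' F' (α s') / reachProb P' F' (α s)

/-- The random walk `W^p` on `ℕ`: `0` absorbing, up with probability `p`,
down with probability `1 - p`. -/
def walkKernel (p : ℝ≥0∞) : ℕ → ℕ → ℝ≥0∞ := fun m n =>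
  if m = 0 then (if n = 0 then 1 else 0)
  else if n = m + 1 then p
  else if n + 1 = m then 1 - p
  else 0

/-- `(C, λ)` is a layered Markov chain. -/
def IsLMC (P : S → S → ℝ≥0∞) (lam : S → ℕ) : Prop :=
  (∀ s s', 0 < P s s' → (lam s : ℤ) ≤ (lam s' : ℤ) + 1) ∧
  (∀ n : ℕ, {s : S | lam s = n}.Finite)

/-- Total probability of increasing the level. -/
def Pup (P : S → S → ℝ≥0∞) (lam : S → ℕ) (s : S) : ℝ≥0∞ :=
  ∑' s' : {s' : S // lam s < lam s'}, P s s'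

/-- Total probability of decreasing the level (by one). -/
def Pdown (P : S → S → ℝ≥0∞) (lam : S → ℕ) (s : S) : ℝ≥0∞ :=
  ∑' s' : {s' : S // lam s' + 1 = lam s}, P s s'

/-- Total probability of keeping the same level. -/
def Peq (P : S → S → ℝ≥0∞) (lam : S → ℕ) (s : S) : ℝ≥0∞ :=
  ∑' s' : {s' : S // lam s' = lam s}, P s s'

/-- `(C, λ)` is `(p⁺, N₀)`-divergent. -/
def Divergent (P : S → S → ℝ≥0∞) (lam : S → ℕ) (pplus : ℝ≥0∞) (N₀ : ℕ) : Prop :=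
  1/2 < pplus ∧ ∀ s : S, N₀ < lam s → Peq P lam s < 1 →
    pplus ≤ Pup P lam s / (Pdown P lam s + Pup P lam s)

end

open scoped Classical

noncomputable section Aux

variable {S : Type*}

private lemma exists_cons_of_head? {l : List S} {s : S} (h : l.head? = some s) :
    ∃ t, l = s :: t := by
  cases l with
  | nil => simp at h
  | cons a t =>
    obtain rfl : a = s := by simpa using h
    exact ⟨t, rfl⟩

private lemma pathProb_cons (P : S → S → ℝ≥0∞) (s : S) {s' : S} {l : List S}
    (h : l.head? = some s') :
    pathProb P (s :: l) = P s s' * pathProb P l := by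
  cases l with
  | nil => simp at h
  | cons b t =>
    obtain rfl : b = s' := by simpa using h
    rfl

/-- Probability of surviving `n` steps inside `A`. -/
def stepSum (P : S → S → ℝ≥0∞) (A : Set S) (s : S) (n : ℕ) : ℝ≥0∞ :=
  ∑' l : {l : List S // l.length = n + 1 ∧ l.head? = some s ∧ ∀ x ∈ l, x ∈ A},
    pathProb P (l : List S)

lemma surviveProb_eq_stepSum (P : S → S → ℝ≥0∞) (R : Set S) (s : S) (n : ℕ) :
    surviveProb P R s n = stepSum P Rᶜ s n := rfl

lemma stepSum_eq_zero (P : S → S → ℝ≥0∞) {A : Set S} {s : S} (hs : s ∉ A) (n : ℕ) :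
    stepSum P A s n = 0 := by
  have : IsEmpty {l : List S // l.length = n + 1 ∧ l.head? = some s ∧ ∀ x ∈ l, x ∈ A} := by
    refine ⟨?_⟩
    rintro ⟨l, hlen, hhead, hA⟩
    obtain ⟨t, rfl⟩ := exists_cons_of_head? hhead
    exact hs (hA s List.mem_cons_self)
  exact tsum_empty

lemma stepSum_zero (P : S → S → ℝ≥0∞) (A : Set S) (s : S) :
    stepSum P A s 0 = if s ∈ A then 1 else 0 := by
  split_ifs with hs
  · refine (tsum_eq_single (⟨[s], by simp, rfl, by simpa using hs⟩ :
      {l : List S // l.length = 0 + 1 ∧ l.head? = some s ∧ ∀ x ∈ l, x ∈ A}) ?_).trans rfl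
    rintro ⟨l, hlen, hhead, hA⟩ hne
    exfalso
    apply hne
    obtain ⟨a, rfl⟩ := List.length_eq_one_iff.mp hlen
    obtain rfl : a = s := by simpa using hhead
    rfl
  · exact stepSum_eq_zero P hs 0

lemma stepSum_succ (P : S → S → ℝ≥0∞) (A : Set S) (s : S) (n : ℕ) :
    stepSum P A s (n + 1) =
      if s ∈ A then ∑' s' : S, P s s' * stepSum P A s' n else 0 := by
  split_ifs with hs
  · let f : (Σ s' : S, {l : List S // l.length = n + 1 ∧ l.head? = some s' ∧
        ∀ x ∈ l, x ∈ A}) →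
        {l : List S // l.length = (n + 1) + 1 ∧ l.head? = some s ∧ ∀ x ∈ l, x ∈ A} :=
      fun p => ⟨s :: p.2.1, by
        obtain ⟨hlen, hhead, hA⟩ := p.2.2
        refine ⟨by simp [hlen], rfl, ?_⟩
        intro x hx
        rcases List.mem_cons.mp hx with rfl | hx
        · exact hs
        · exact hA x hx⟩
    have hfbij : Function.Bijective f := by
      constructor
      · rintro ⟨s₁, l₁, h₁⟩ ⟨s₂, l₂, h₂⟩ h
        have hl : l₁ = l₂ := by
          have h2 := congrArg Subtype.val h
          simpa [f] using h2
        subst hl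
        obtain rfl : s₁ = s₂ := Option.some.inj (h₁.2.1.symm.trans h₂.2.1)
        rfl
      · rintro ⟨l, hlen, hhead, hA⟩
        obtain ⟨t, rfl⟩ := exists_cons_of_head? hhead
        have htlen : t.length = n + 1 := by simpa using hlen
        obtain ⟨u, hu⟩ : ∃ u, t.head? = some u := by
          cases t with
          | nil => simp at htlen
          | cons b u => exact ⟨b, rfl⟩
        exact ⟨⟨u, t, htlen, hu, fun x hx => hA x (List.mem_cons_of_mem _ hx)⟩, rfl⟩
    calc stepSum P A s (n + 1)
        = ∑' p : (Σ s' : S, {l : List S // l.length = n + 1 ∧ l.head? = some s' ∧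
            ∀ x ∈ l, x ∈ A}), pathProb P (s :: p.2.1) :=
          ((Equiv.ofBijective f hfbij).tsum_eq
            (fun l : {l : List S // l.length = (n + 1) + 1 ∧ l.head? = some s ∧
              ∀ x ∈ l, x ∈ A} => pathProb P (l : List S))).symm
      _ = ∑' s' : S, ∑' l : {l : List S // l.length = n + 1 ∧ l.head? = some s' ∧
            ∀ x ∈ l, x ∈ A}, pathProb P (s :: l.1) := ENNReal.tsum_sigma' _
      _ = ∑' s' : S, P s s' * stepSum P A s' n := by
          refine tsum_congr fun s' => ?_
          rw [stepSum, ← ENNReal.tsum_mul_left]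
          exact tsum_congr fun l => pathProb_cons P s l.2.2.1
  · exact stepSum_eq_zero P hs (n + 1)

lemma stepSum_le_one (P : S → S → ℝ≥0∞) (hP : IsStochastic P) (A : Set S) :
    ∀ n s, stepSum P A s n ≤ 1 := by
  intro n
  induction n with
  | zero =>
    intro s
    rw [stepSum_zero]
    split_ifs <;> simp
  | succ n ih =>
    intro s
    rw [stepSum_succ]
    split_ifs with hs
    · calc ∑' s' : S, P s s' * stepSum P A s' n
          ≤ ∑' s' : S, P s s' * 1 :=
            ENNReal.tsum_le_tsum fun s' => mul_le_mul_right (ih s') _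
        _ = 1 := by simpa using hP s
    · exact zero_le_one

lemma stepSum_succ_le (P : S → S → ℝ≥0∞) (hP : IsStochastic P) (A : Set S) :
    ∀ n s, stepSum P A s (n + 1) ≤ stepSum P A s n := by
  intro n
  induction n with
  | zero =>
    intro s
    rw [stepSum_zero, stepSum_succ]
    split_ifs with hs
    · calc ∑' s' : S, P s s' * stepSum P A s' 0
          ≤ ∑' s' : S, P s s' * 1 :=
            ENNReal.tsum_le_tsum fun s' => mul_le_mul_right (stepSum_le_one P hP A 0 s') _
        _ = 1 := by simpa using hP s
    · exact le_rfl
  | succ n ih =>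
    intro s
    rw [stepSum_succ P A s (n + 1), stepSum_succ P A s n]
    split_ifs with hs
    · exact ENNReal.tsum_le_tsum fun s' => mul_le_mul_right (ih s') _
    · exact le_rfl

lemma stepSum_anti (P : S → S → ℝ≥0∞) (hP : IsStochastic P) (A : Set S) (s : S) :
    Antitone (stepSum P A s) :=
  antitone_nat_of_succ_le fun n => stepSum_succ_le P hP A n s

lemma stepSum_mono_set (P : S → S → ℝ≥0∞) {A B : Set S} (hAB : A ⊆ B) :
    ∀ n s, stepSum P A s n ≤ stepSum P B s n := by
  intro n
  induction n with
  | zero =>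
    intro s
    rw [stepSum_zero, stepSum_zero]
    split_ifs with h1 h2
    · exact le_rfl
    · exact absurd (hAB h1) h2
    · exact zero_le_one
    · exact le_rfl
  | succ n ih =>
    intro s
    rw [stepSum_succ, stepSum_succ]
    split_ifs with h1 h2
    · exact ENNReal.tsum_le_tsum fun s' => mul_le_mul_right (ih s') _
    · exact absurd (hAB h1) h2
    · exact zero_le'
    · exact le_rfl

/-- Probability of hitting `R` within `n` steps. -/
def hitN (P : S → S → ℝ≥0∞) (R : Set S) (s : S) (n : ℕ) : ℝ≥0∞ :=
  ∑' l : {l : List S // FirstHitPath R s l ∧ l.length ≤ n + 1}, pathProb P (l : List S)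

lemma firstHitPath_of_mem {R : Set S} {s : S} (hs : s ∈ R) {l : List S}
    (h : FirstHitPath R s l) : l = [s] := by
  obtain ⟨hhead, hne, hlast, hmid⟩ := h
  obtain ⟨t, rfl⟩ := exists_cons_of_head? hhead
  cases t with
  | nil => rfl
  | cons b u =>
    exfalso
    refine hmid ⟨0, by simp⟩ (by simp) ?_
    simpa using hs

lemma firstHitPath_singleton {R : Set S} {s : S} (hs : s ∈ R) :
    FirstHitPath R s [s] := by
  refine ⟨rfl, List.cons_ne_nil s [], by simpa using hs, ?_⟩
  intro i hi
  simp at hi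

lemma hitN_of_mem (P : S → S → ℝ≥0∞) {R : Set S} {s : S} (hs : s ∈ R) (n : ℕ) :
    hitN P R s n = 1 := by
  refine (tsum_eq_single (⟨[s], firstHitPath_singleton hs, by simp⟩ :
    {l : List S // FirstHitPath R s l ∧ l.length ≤ n + 1}) ?_).trans rfl
  rintro ⟨l, hl, hlen⟩ hne
  exact absurd (Subtype.ext (firstHitPath_of_mem hs hl)) hne

lemma hitN_zero_of_not_mem (P : S → S → ℝ≥0∞) {R : Set S} {s : S} (hs : s ∉ R) :
    hitN P R s 0 = 0 := by
  have : IsEmpty {l : List S // FirstHitPath R s l ∧ l.length ≤ 0 + 1} := by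
    refine ⟨?_⟩
    rintro ⟨l, ⟨hhead, hne, hlast, hmid⟩, hlen⟩
    obtain ⟨t, rfl⟩ := exists_cons_of_head? hhead
    obtain rfl : t = [] := by
      cases t with
      | nil => rfl
      | cons b u => simp at hlen
    exact hs (by simpa using hlast)
  exact tsum_empty

lemma hitN_succ (P : S → S → ℝ≥0∞) {R : Set S} {s : S} (hs : s ∉ R) (n : ℕ) :
    hitN P R s (n + 1) = ∑' s' : S, P s s' * hitN P R s' n := by
  let f : (Σ s' : S, {l : List S // FirstHitPath R s' l ∧ l.length ≤ n + 1}) →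
      {l : List S // FirstHitPath R s l ∧ l.length ≤ (n + 1) + 1} :=
    fun p => ⟨s :: p.2.1, by
      obtain ⟨⟨hhead, hne, hlast, hmid⟩, hlen⟩ := p.2.2
      refine ⟨⟨rfl, List.cons_ne_nil _ _, ?_, ?_⟩, by simpa using Nat.succ_le_succ hlen⟩
      · rw [List.getLast_cons hne]; exact hlast
      · rintro ⟨iv, hiv⟩ hlt
        cases iv with
        | zero => simpa using hs
        | succ j =>
          have hj : j + 1 < p.2.1.length := by simpa using hlt
          have hj' : j < p.2.1.length := Nat.lt_of_succ_lt hj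
          have : (s :: p.2.1).get ⟨j + 1, hiv⟩ = p.2.1.get ⟨j, hj'⟩ := rfl
          rw [this]
          exact hmid ⟨j, hj'⟩ hj⟩
  have hfbij : Function.Bijective f := by
    constructor
    · rintro ⟨s₁, l₁, h₁⟩ ⟨s₂, l₂, h₂⟩ h
      have hl : l₁ = l₂ := by
        have h2 := congrArg Subtype.val h
        simpa [f] using h2
      subst hl
      obtain rfl : s₁ = s₂ := Option.some.inj (h₁.1.1.symm.trans h₂.1.1)
      rfl
    · rintro ⟨l, ⟨hhead, hne, hlast, hmid⟩, hlen⟩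
      obtain ⟨t, rfl⟩ := exists_cons_of_head? hhead
      have htne : t ≠ [] := by
        rintro rfl
        exact hs (by simpa using hlast)
      obtain ⟨u, hu⟩ : ∃ u, t.head? = some u := by
        cases t with
        | nil => exact absurd rfl htne
        | cons b u => exact ⟨b, rfl⟩
      refine ⟨⟨u, t, ⟨⟨hu, htne, ?_, ?_⟩, ?_⟩⟩, rfl⟩
      · rw [List.getLast_cons htne] at hlast; exact hlast
      · rintro ⟨j, hj⟩ hlt
        have hj2 : (j + 1) + 1 < (s :: t).length := by simpa using Nat.succ_lt_succ hlt
        have hj1 : j + 1 < (s :: t).length := by simp; omega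
        have : t.get ⟨j, hj⟩ = (s :: t).get ⟨j + 1, hj1⟩ := rfl
        rw [this]
        exact hmid ⟨j + 1, hj1⟩ hj2
      · have := hlen
        simp at this
        omega
  calc hitN P R s (n + 1)
      = ∑' p : (Σ s' : S, {l : List S // FirstHitPath R s' l ∧ l.length ≤ n + 1}),
          pathProb P (s :: p.2.1) :=
        ((Equiv.ofBijective f hfbij).tsum_eq
          (fun l : {l : List S // FirstHitPath R s l ∧ l.length ≤ (n + 1) + 1} =>
            pathProb P (l : List S))).symm
    _ = ∑' s' : S, ∑' l : {l : List S // FirstHitPath R s' l ∧ l.length ≤ n + 1},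
          pathProb P (s :: l.1) := ENNReal.tsum_sigma' _
    _ = ∑' s' : S, P s s' * hitN P R s' n := by
        refine tsum_congr fun s' => ?_
        rw [hitN, ← ENNReal.tsum_mul_left]
        exact tsum_congr fun l => pathProb_cons P s l.2.1.1

lemma hitN_add_stepSum (P : S → S → ℝ≥0∞) (hP : IsStochastic P) (R : Set S) :
    ∀ n s, hitN P R s n + stepSum P Rᶜ s n = 1 := by
  intro n
  induction n with
  | zero =>
    intro s
    by_cases hs : s ∈ R
    · rw [hitN_of_mem P hs, stepSum_eq_zero P (by simpa using hs), add_zero]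
    · rw [hitN_zero_of_not_mem P hs, stepSum_zero]
      simp [hs]
  | succ n ih =>
    intro s
    by_cases hs : s ∈ R
    · rw [hitN_of_mem P hs, stepSum_eq_zero P (by simpa using hs), add_zero]
    · rw [hitN_succ P hs, stepSum_succ, if_pos (by simpa using hs : s ∈ Rᶜ),
        ← ENNReal.tsum_add]
      calc ∑' s' : S, (P s s' * hitN P R s' n + P s s' * stepSum P Rᶜ s' n)
          = ∑' s' : S, P s s' * 1 := by
            refine tsum_congr fun s' => ?_
            rw [← mul_add, ih s']
        _ = 1 := by simpa using hP s

lemma hitN_le_reachProb (P : S → S → ℝ≥0∞) (R : Set S) (s : S) (n : ℕ) :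
    hitN P R s n ≤ reachProb P R s := by
  have := ENNReal.tsum_comp_le_tsum_of_injective
    (f := fun x : {l : List S // FirstHitPath R s l ∧ l.length ≤ n + 1} =>
      (⟨x.1, x.2.1⟩ : {l : List S // FirstHitPath R s l}))
    (fun a b h => by
      apply Subtype.ext
      have h2 := congrArg Subtype.val h
      simpa using h2)
    (fun l : {l : List S // FirstHitPath R s l} => pathProb P (l : List S))
  exact this

lemma reachProb_le_iSup_hitN (P : S → S → ℝ≥0∞) (R : Set S) (s : S) :
    reachProb P R s ≤ ⨆ n, hitN P R s n := by
  rw [reachProb, ENNReal.tsum_eq_iSup_sum]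
  refine iSup_le fun F => ?_
  set n := F.sup fun x => (x : List S).length with hn
  refine le_trans ?_ (le_iSup _ n)
  have hmap : ∀ x ∈ F, (x : List S).length ≤ n + 1 := by
    intro x hx
    have h2 := Finset.le_sup
      (f := fun x : {l : List S // FirstHitPath R s l} => (x : List S).length) hx
    exact Nat.le_succ_of_le (le_trans h2 (le_of_eq hn.symm))
  calc ∑ x ∈ F, pathProb P (x : List S)
      = ∑ x ∈ F.attach, pathProb P (x.1 : List S) := (Finset.sum_attach _ _).symm
    _ = ∑ y ∈ F.attach.image (fun x => (⟨x.1.1, x.1.2, hmap x.1 x.2⟩ :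
          {l : List S // FirstHitPath R s l ∧ l.length ≤ n + 1})),
          pathProb P (y : List S) := by
        rw [Finset.sum_image]
        intro a _ b _ h
        simp only [Subtype.mk.injEq] at h
        exact Subtype.ext (Subtype.ext h)
    _ ≤ ∑' y : {l : List S // FirstHitPath R s l ∧ l.length ≤ n + 1},
          pathProb P (y : List S) := ENNReal.sum_le_tsum _

end Aux
noncomputable section Main

variable {S : Type*}

lemma drift_bound (P : S → S → ℝ≥0∞) (hP : IsStochastic P) (R : Set S)
    (L : S → ℝ≥0)
    (hdrift : ∀ s ∉ R, ∑' s', P s s' * (L s' : ℝ≥0∞) ≤ (L s : ℝ≥0∞))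
    (M : ℕ) (hM : 1 ≤ M) :
    ∀ n s, stepSum P Rᶜ s n ≤
      stepSum P {t : S | L t < (M : ℝ≥0) ∧ t ∉ R} s n + (L s : ℝ≥0∞) / M := by
  set A : Set S := {t : S | L t < (M : ℝ≥0) ∧ t ∉ R} with hA
  have hM0 : (M : ℝ≥0∞) ≠ 0 := Nat.cast_ne_zero.mpr (by omega)
  have hMtop : (M : ℝ≥0∞) ≠ ⊤ := ENNReal.natCast_ne_top M
  intro n
  induction n with
  | zero =>
    intro s
    by_cases hsR : s ∈ R
    · rw [stepSum_eq_zero P (show s ∉ Rᶜ from fun h => h hsR)]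
      exact zero_le
    · by_cases hsM : L s < (M : ℝ≥0)
      · have hsA : s ∈ A := ⟨hsM, hsR⟩
        rw [stepSum_zero, stepSum_zero, if_pos (show s ∈ Rᶜ from hsR), if_pos hsA]
        exact le_self_add
      · refine le_trans ?_ le_add_self
        rw [stepSum_zero, if_pos (show s ∈ Rᶜ from hsR)]
        have h1 : (M : ℝ≥0∞) ≤ (L s : ℝ≥0∞) := by
          exact_mod_cast le_of_not_gt hsM
        calc (1 : ℝ≥0∞) = (M : ℝ≥0∞) / M := (ENNReal.div_self hM0 hMtop).symm
          _ ≤ (L s : ℝ≥0∞) / M := ENNReal.div_le_div_right h1 _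
  | succ n ih =>
    intro s
    by_cases hsR : s ∈ R
    · rw [stepSum_eq_zero P (show s ∉ Rᶜ from fun h => h hsR)]
      exact zero_le
    · by_cases hsM : L s < (M : ℝ≥0)
      · have hsA : s ∈ A := ⟨hsM, hsR⟩
        rw [stepSum_succ, if_pos (show s ∈ Rᶜ from hsR), stepSum_succ, if_pos hsA]
        calc ∑' s', P s s' * stepSum P Rᶜ s' n
            ≤ ∑' s', P s s' * (stepSum P A s' n + (L s' : ℝ≥0∞) / M) :=
              ENNReal.tsum_le_tsum fun s' => mul_le_mul_right (ih s') _
          _ = (∑' s', P s s' * stepSum P A s' n) +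
              ∑' s', P s s' * ((L s' : ℝ≥0∞) / M) := by
              simp_rw [mul_add]
              exact ENNReal.tsum_add
          _ ≤ (∑' s', P s s' * stepSum P A s' n) + (L s : ℝ≥0∞) / M := by
              refine add_le_add_right ?_ _
              have heq : ∑' s', P s s' * ((L s' : ℝ≥0∞) / M)
                  = (∑' s', P s s' * (L s' : ℝ≥0∞)) / M := by
                simp_rw [div_eq_mul_inv, ← mul_assoc]
                exact ENNReal.tsum_mul_right
              rw [heq]
              exact ENNReal.div_le_div_right (hdrift s hsR) _
      · refine le_trans ?_ le_add_self
        have h1 : (M : ℝ≥0∞) ≤ (L s : ℝ≥0∞) := by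
          exact_mod_cast le_of_not_gt hsM
        calc stepSum P Rᶜ s (n + 1) ≤ 1 := stepSum_le_one P hP Rᶜ _ s
          _ = (M : ℝ≥0∞) / M := (ENNReal.div_self hM0 hMtop).symm
          _ ≤ (L s : ℝ≥0∞) / M := ENNReal.div_le_div_right h1 _

lemma exists_surv_lt_one (P : S → S → ℝ≥0∞) (hP : IsStochastic P) (R : Set S)
    {t : S} (ht : 0 < reachProb P R t) :
    ∃ n, stepSum P Rᶜ t n < 1 := by
  have h1 : 0 < ⨆ n, hitN P R t n := lt_of_lt_of_le ht (reachProb_le_iSup_hitN P R t)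
  obtain ⟨n, hn⟩ := lt_iSup_iff.mp h1
  refine ⟨n, ?_⟩
  have h2 := hitN_add_stepSum P hP R n t
  by_contra hcon
  push_neg at hcon
  have h4 : stepSum P Rᶜ t n = 1 := le_antisymm (stepSum_le_one P hP _ n t) hcon
  rw [h4] at h2
  have h5 : hitN P R t n + 1 = 0 + 1 := by rw [h2, zero_add]
  have h6 : hitN P R t n = 0 := (ENNReal.add_left_inj ENNReal.one_ne_top).mp h5
  rw [h6] at hn
  exact lt_irrefl _ hn

lemma inf_surv_le (P : S → S → ℝ≥0∞) (hP : IsStochastic P) (R : Set S)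
    (hreach : ∀ s, 0 < reachProb P R s)
    (L : S → ℝ≥0) (hfin : ∀ n : ℕ, {s : S | L s ≤ (n : ℝ≥0)}.Finite)
    (hdrift : ∀ s ∉ R, ∑' s', P s s' * (L s' : ℝ≥0∞) ≤ (L s : ℝ≥0∞))
    (s : S) (M : ℕ) (hM : 1 ≤ M) :
    ⨅ n, stepSum P Rᶜ s n ≤ (L s : ℝ≥0∞) / M := by
  classical
  set A : Set S := {t : S | L t < (M : ℝ≥0) ∧ t ∉ R} with hA
  have hAfin : A.Finite := (hfin M).subset fun t ht => le_of_lt ht.1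
  have hAsub : A ⊆ Rᶜ := fun t ht => ht.2
  have hch : ∀ t : S, ∃ n, stepSum P Rᶜ t n < 1 :=
    fun t => exists_surv_lt_one P hP R (hreach t)
  choose Nf hNf using hch
  set N := hAfin.toFinset.sup Nf with hN
  set ε := hAfin.toFinset.sup (fun t => stepSum P A t N) with hε
  have hstepε : ∀ t ∈ A, stepSum P A t N ≤ ε := fun t ht =>
    Finset.le_sup (f := fun t => stepSum P A t N) (hAfin.mem_toFinset.mpr ht)
  have hε1 : ε < 1 := by
    rw [hε]
    refine (Finset.sup_lt_iff zero_lt_one).mpr fun t ht => ?_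
    calc stepSum P A t N ≤ stepSum P Rᶜ t N := stepSum_mono_set P hAsub N t
      _ ≤ stepSum P Rᶜ t (Nf t) :=
        stepSum_anti P hP Rᶜ t (Finset.le_sup (f := Nf) ht)
      _ < 1 := hNf t
  have hCl : ∀ m t, stepSum P A t (m + N) ≤ stepSum P A t m * ε := by
    intro m
    induction m with
    | zero =>
      intro t
      by_cases ht : t ∈ A
      · rw [stepSum_zero, if_pos ht, one_mul, zero_add]
        exact hstepε t ht
      · rw [stepSum_eq_zero P ht]
        exact zero_le
    | succ m ih =>
      intro t
      by_cases ht : t ∈ A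
      · have he : m + 1 + N = (m + N) + 1 := by omega
        rw [he, stepSum_succ, if_pos ht, stepSum_succ, if_pos ht]
        calc ∑' t', P t t' * stepSum P A t' (m + N)
            ≤ ∑' t', P t t' * (stepSum P A t' m * ε) :=
              ENNReal.tsum_le_tsum fun t' => mul_le_mul_right (ih t') _
          _ = (∑' t', P t t' * stepSum P A t' m) * ε := by
              simp_rw [← mul_assoc]
              exact ENNReal.tsum_mul_right
      · rw [stepSum_eq_zero P ht]
        exact zero_le
  have hpow : ∀ k t, stepSum P A t (k * N) ≤ ε ^ k := by
    intro k
    induction k with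
    | zero =>
      intro t
      rw [pow_zero]
      simpa using stepSum_le_one P hP A 0 t
    | succ k ih =>
      intro t
      have he : (k + 1) * N = k * N + N := by ring
      rw [he, pow_succ]
      exact le_trans (hCl (k * N) t) (mul_le_mul_left (ih t) _)
  refine ENNReal.le_of_forall_pos_le_add fun δ hδ _ => ?_
  have htend := ENNReal.tendsto_pow_atTop_nhds_zero_of_lt_one hε1
  have hδ0 : (0 : ℝ≥0∞) < δ := ENNReal.coe_pos.mpr hδ
  obtain ⟨k, hk⟩ := (htend.eventually_lt_const hδ0).exists
  calc ⨅ n, stepSum P Rᶜ s n ≤ stepSum P Rᶜ s (k * N) := iInf_le _ _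
    _ ≤ stepSum P A s (k * N) + (L s : ℝ≥0∞) / M :=
      drift_bound P hP R L hdrift M hM _ s
    _ ≤ ε ^ k + (L s : ℝ≥0∞) / M := add_le_add_left (hpow k s) _
    _ ≤ (L s : ℝ≥0∞) / M + δ := by
        rw [add_comm]
        exact add_le_add_right (le_of_lt hk) _

lemma inf_surv_zero (P : S → S → ℝ≥0∞) (hP : IsStochastic P) (R : Set S)
    (hreach : ∀ s, 0 < reachProb P R s)
    (L : S → ℝ≥0) (hfin : ∀ n : ℕ, {s : S | L s ≤ (n : ℝ≥0)}.Finite)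
    (hdrift : ∀ s ∉ R, ∑' s', P s s' * (L s' : ℝ≥0∞) ≤ (L s : ℝ≥0∞))
    (s : S) :
    ⨅ n, stepSum P Rᶜ s n = 0 := by
  refine le_antisymm ?_ zero_le
  refine ENNReal.le_of_forall_pos_le_add fun δ hδ _ => ?_
  rw [zero_add]
  obtain ⟨M₀, hM₀⟩ := exists_nat_ge ((L s) / δ : ℝ≥0)
  set M := M₀ + 1 with hM
  have hM1 : 1 ≤ M := Nat.le_add_left 1 M₀
  have hLs : (L s : ℝ≥0) ≤ (M : ℝ≥0) * δ := by
    have h1 : ((L s) / δ : ℝ≥0) ≤ (M : ℝ≥0) :=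
      le_trans hM₀ (by exact_mod_cast Nat.le_succ M₀)
    calc (L s : ℝ≥0) = (L s / δ) * δ := (div_mul_cancel₀ _ hδ.ne').symm
      _ ≤ (M : ℝ≥0) * δ := mul_le_mul_left h1 δ
  have hdiv : (L s : ℝ≥0∞) / (M : ℝ≥0∞) ≤ (δ : ℝ≥0∞) := by
    rw [ENNReal.div_le_iff_le_mul
      (Or.inl (show (M : ℝ≥0∞) ≠ 0 from Nat.cast_ne_zero.mpr (by omega)))
      (Or.inl (ENNReal.natCast_ne_top M))]
    calc (L s : ℝ≥0∞) ≤ ((M : ℝ≥0) * δ : ℝ≥0) := by exact_mod_cast hLs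
      _ = (δ : ℝ≥0∞) * (M : ℝ≥0∞) := by
        push_cast
        ring
  exact le_trans (inf_surv_le P hP R hreach L hfin hdrift s M hM1) hdiv

end Main

section Thms

variable {S : Type*}

theorem stmt1 [Countable S] (P : S → S → ℝ≥0∞) (hP : IsStochastic P)
    (R : Set S) (hreach : ∀ s, 0 < reachProb P R s)
    (L : S → ℝ≥0) (hfin : ∀ n : ℕ, {s : S | L s ≤ (n : ℝ≥0)}.Finite)
    (hdrift : ∀ s ∉ R, ∑' s', P s s' * (L s' : ℝ≥0∞) ≤ (L s : ℝ≥0∞)) :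
    ∀ s, reachProb P R s = 1 := by
  intro s
  refine le_antisymm ?_ ?_
  · refine le_trans (reachProb_le_iSup_hitN P R s) (iSup_le fun n => ?_)
    calc hitN P R s n ≤ hitN P R s n + stepSum P Rᶜ s n := le_self_add
      _ = 1 := hitN_add_stepSum P hP R n s
  · refine ENNReal.le_of_forall_pos_le_add fun δ hδ _ => ?_
    have h0 : ⨅ n, stepSum P Rᶜ s n = 0 := inf_surv_zero P hP R hreach L hfin hdrift s
    have hδ0 : ⨅ n, stepSum P Rᶜ s n < (δ : ℝ≥0∞) := by
      rw [h0]
      exact ENNReal.coe_pos.mpr hδ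
    obtain ⟨n, hn⟩ := iInf_lt_iff.mp hδ0
    calc (1 : ℝ≥0∞) = hitN P R s n + stepSum P Rᶜ s n :=
        (hitN_add_stepSum P hP R n s).symm
      _ ≤ reachProb P R s + δ :=
        add_le_add (hitN_le_reachProb P R s n) (le_of_lt hn)

end Thms
end

section
/- Let C=(S,P) be a countable Markov chain, s₀ ∈ S and R ⊆ S such that from every state the probability of eventually reaching R is positive. Suppose that for every δ > 0 there exist a finite set S_δ ⊆ S and m_δ ∈ ℕ such that the probability that X_i ∈ S_δ for all i ≥ m_δ (for the chain started at s₀) exceeds 1 − δ. Then the probability of eventually reaching R from s₀ equals 1. -/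
open scoped ENNReal NNReal BigOperators
open Filter

open scoped Classical

namespace StmtAux

noncomputable section
variable {S : Type*}

def consEquiv (S : Type*) : (S × List S) ≃ {l : List S // l ≠ []} where
  toFun p := ⟨p.1 :: p.2, by simp⟩
  invFun l := (l.1.head l.2, l.1.tail)
  left_inv p := by simp
  right_inv l := Subtype.ext (by simp)

lemma tsum_cons_eq (f : List S → ℝ≥0∞) (h0 : f [] = 0) :
    ∑' l : List S, f l = ∑' p : S × List S, f (p.1 :: p.2) := by
  have h1 := (consEquiv S).tsum_eq (fun l : {l : List S // l ≠ []} => f l.1)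
  rw [show (∑' p : S × List S, f (p.1 :: p.2)) = ∑' p : S × List S,
      (fun l : {l : List S // l ≠ []} => f l.1) (consEquiv S p) by
    exact tsum_congr fun p => rfl, h1]
  exact (tsum_subtype_eq_of_support_subset (by
    intro x hx
    simp only [Function.mem_support] at hx
    intro hne; rw [hne] at hx; exact hx h0)).symm

/-- time-indexed path sum -/
def pS (P : S → S → ℝ≥0∞) (Q : ℕ → S → Prop) (n : ℕ) (s : S) : ℝ≥0∞ :=
  ∑' l : List S, if l.length = n + 1 ∧ l.head? = some s ∧
    ∀ i : Fin l.length, Q i (l.get i) then pathProb P l else 0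

variable (P : S → S → ℝ≥0∞)

lemma pS_zero (Q : ℕ → S → Prop) (s : S) :
    pS P Q 0 s = if Q 0 s then 1 else 0 := by
  rw [pS, tsum_eq_single [s]]
  · by_cases h : Q 0 s
    · rw [if_pos, if_pos h]
      · rfl
      · refine ⟨rfl, rfl, ?_⟩
        intro i
        have : (i : ℕ) = 0 := by have : (i:ℕ) < 1 := by simpa using i.isLt
                                 omega
        have h2 : ([s].get i) = s := by
          rcases i with ⟨i, hi⟩
          simp at hi; subst hi; rfl
        rw [h2, this]; exact h
    · rw [if_neg, if_neg h]
      rintro ⟨h1, h2, h3⟩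
      have : ([s].get ⟨0, by simp⟩) = s := rfl
      exact h (by simpa [this] using h3 ⟨0, by simp⟩)
  · intro l hl
    rw [if_neg]
    rintro ⟨h1, h2, -⟩
    apply hl
    rcases l with _ | ⟨a, l⟩
    · simp at h2
    · simp at h2
      subst h2
      have : l = [] := by simpa using h1
      rw [this]

end
end StmtAux
namespace StmtAux
noncomputable section
variable {S : Type*} (P : S → S → ℝ≥0∞)

lemma pS_succ (Q : ℕ → S → Prop) (n : ℕ) (s : S) :
    pS P Q (n+1) s = if Q 0 s then
      ∑' s', P s s' * pS P (fun t => Q (t+1)) n s' else 0 := by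
  set F : List S → ℝ≥0∞ := fun l =>
    if l.length = n + 1 + 1 ∧ l.head? = some s ∧ ∀ i : Fin l.length, Q i (l.get i)
    then pathProb P l else 0 with hF
  have hpS : pS P Q (n+1) s = ∑' l, F l := rfl
  have h0 : F [] = 0 := by simp [hF]
  rw [hpS, tsum_cons_eq F h0, ENNReal.tsum_prod']
  have hstep1 : ∀ a : S, (∑' l' : List S, F (a :: l')) =
      if a = s then ∑' l' : List S, F (s :: l') else 0 := by
    intro a
    by_cases ha : a = s
    · rw [if_pos ha, ha]
    · rw [if_neg ha]
      convert tsum_zero with l'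
      simp only [hF]
      rw [if_neg]
      rintro ⟨-, h2, -⟩
      simp at h2; exact ha h2
  rw [tsum_congr hstep1, tsum_ite_eq]
  by_cases hQ : Q 0 s
  · rw [if_pos hQ]
    have key : ∀ l' : List S, F (s :: l') =
        ∑' s', P s s' * (if l'.length = n+1 ∧ l'.head? = some s' ∧
          ∀ i : Fin l'.length, Q (i+1) (l'.get i) then pathProb P l' else 0) := by
      intro l'
      rcases l' with _ | ⟨b, l''⟩
      · rw [show F (s :: ([] : List S)) = 0 by simp [hF]]
        symm; convert tsum_zero with s'
        rw [if_neg, mul_zero]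
        rintro ⟨-, h2, -⟩; simp at h2
      · rw [tsum_eq_single b ?side]
        case side =>
          intro s' hs'
          rw [if_neg, mul_zero]
          rintro ⟨-, h2, -⟩
          simp at h2; exact hs' h2.symm
        rw [mul_ite, mul_zero]
        simp only [hF]
        by_cases hc : (b :: l'').length = n + 1 ∧
            ∀ i : Fin (b::l'').length, Q ((i:ℕ)+1) ((b::l'').get i)
        · rw [if_pos, if_pos ⟨hc.1, rfl, hc.2⟩]
          · rfl
          · refine ⟨by simpa using hc.1, rfl, ?_⟩
            intro i
            induction i using Fin.cases with
            | zero => exact hQ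
            | succ i => exact hc.2 i
        · rw [if_neg, if_neg]
          · rintro ⟨h1, -, h3⟩; exact hc ⟨h1, h3⟩
          · rintro ⟨h1, -, h3⟩
            refine hc ⟨by simpa using h1, fun i => h3 i.succ⟩
    rw [tsum_congr key, ENNReal.tsum_comm]
    refine tsum_congr fun s' => ?_
    rw [pS]
    exact ENNReal.tsum_mul_left
  · rw [if_neg hQ]
    convert tsum_zero with l'
    simp only [hF]
    rw [if_neg]
    rintro ⟨-, -, h3⟩
    exact hQ (h3 ⟨0, by simp⟩)

end
end StmtAux
namespace StmtAux
noncomputable section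
variable {S : Type*} (P : S → S → ℝ≥0∞)

lemma pS_mono {Q Q' : ℕ → S → Prop} (h : ∀ t x, Q t x → Q' t x) (n : ℕ) (s : S) :
    pS P Q n s ≤ pS P Q' n s := by
  refine Summable.tsum_le_tsum (fun l => ?_) ENNReal.summable ENNReal.summable
  split_ifs with h1 h2
  · exact le_refl _
  · exact absurd ⟨h1.1, h1.2.1, fun i => h _ _ (h1.2.2 i)⟩ h2
  · exact zero_le
  · exact le_refl _

lemma pS_top (hP : IsStochastic P) (n : ℕ) (s : S) :
    pS P (fun _ _ => True) n s = 1 := by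
  induction n generalizing s with
  | zero => rw [pS_zero, if_pos trivial]
  | succ n ih =>
    rw [pS_succ, if_pos trivial]
    calc ∑' s', P s s' * pS P (fun _ _ => True) n s'
        = ∑' s', P s s' := tsum_congr fun s' => by rw [ih s', mul_one]
      _ = 1 := hP s

lemma pS_le_one (hP : IsStochastic P) (Q : ℕ → S → Prop) (n : ℕ) (s : S) :
    pS P Q n s ≤ 1 := by
  rw [← pS_top P hP n s]
  exact pS_mono P (fun _ _ _ => trivial) n s

lemma pS_zero_of_not {Q : ℕ → S → Prop} {s : S} (h : ¬ Q 0 s) (n : ℕ) :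
    pS P Q n s = 0 := by
  cases n with
  | zero => rw [pS_zero, if_neg h]
  | succ n => rw [pS_succ, if_neg h]

lemma pS_antitone (hP : IsStochastic P) (q : S → Prop) (n : ℕ) (s : S) :
    pS P (fun _ => q) (n+1) s ≤ pS P (fun _ => q) n s := by
  induction n generalizing s with
  | zero =>
    rw [pS_succ, pS_zero]
    by_cases h : q s
    · rw [if_pos h, if_pos h]
      calc ∑' s', P s s' * pS P (fun _ => q) 0 s'
          ≤ ∑' s', P s s' * 1 :=
            Summable.tsum_le_tsum (fun s' => mul_le_mul_right
              (pS_le_one P hP _ 0 s') _) ENNReal.summable ENNReal.summable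
        _ = 1 := by simp only [mul_one]; exact hP s
    · rw [if_neg h, if_neg h]
  | succ n ih =>
    rw [pS_succ, pS_succ]
    by_cases h : q s
    · rw [if_pos h, if_pos h]
      exact Summable.tsum_le_tsum (fun s' => mul_le_mul_right (ih s') _)
        ENNReal.summable ENNReal.summable
    · rw [if_neg h, if_neg h]

lemma pS_shift_le (k : ℕ) (C : ℝ≥0∞) :
    ∀ (n : ℕ) (Q : ℕ → S → Prop) (s : S),
      (∀ (t : ℕ) (s' : S), n ≤ t → pS P (fun u => Q (t + u)) k s' ≤ C) →
      pS P Q (n + k) s ≤ C * pS P Q n s := by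
  intro n
  induction n with
  | zero =>
    intro Q s h
    by_cases hq : Q 0 s
    · rw [pS_zero, if_pos hq, mul_one]
      have h0 := h 0 s (le_refl 0)
      have e1 : (fun u => Q (0 + u)) = Q := by
        funext u; rw [Nat.zero_add]
      rw [e1] at h0
      rw [Nat.zero_add]
      exact h0
    · rw [pS_zero_of_not P hq]
      exact zero_le
  | succ n ih =>
    intro Q s h
    have e : n + 1 + k = (n + k) + 1 := by omega
    rw [e, pS_succ, pS_succ]
    by_cases hq : Q 0 s
    · rw [if_pos hq, if_pos hq, ← ENNReal.tsum_mul_left]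
      refine Summable.tsum_le_tsum (fun s' => ?_) ENNReal.summable ENNReal.summable
      have hih : pS P (fun t => Q (t+1)) (n+k) s' ≤ C * pS P (fun t => Q (t+1)) n s' := by
        refine ih _ s' (fun t s'' ht => ?_)
        have e2 : (fun u => Q (t + u + 1)) = fun u => Q ((t+1) + u) := by
          funext u
          have e3 : t + u + 1 = t + 1 + u := by omega
          rw [e3]
        rw [e2]
        exact h (t+1) s'' (by omega)
      calc P s s' * pS P (fun t => Q (t+1)) ((n+k)) s'
          ≤ P s s' * (C * pS P (fun t => Q (t+1)) n s') := mul_le_mul_right hih _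
        _ = C * (P s s' * pS P (fun t => Q (t+1)) n s') := by ring
    · rw [if_neg hq, if_neg hq, mul_zero]

end
end StmtAux
namespace StmtAux
noncomputable section
variable {S : Type*} (P : S → S → ℝ≥0∞) (R : Set S)

lemma fhp_nil (s : S) : ¬ FirstHitPath R s ([] : List S) := by
  rintro ⟨h, -⟩; simp at h

lemma fhp_singleton (s : S) : FirstHitPath R s [s] ↔ s ∈ R := by
  constructor
  · rintro ⟨-, h, hlast, -⟩
    simpa using hlast
  · intro hs
    refine ⟨rfl, by simp, by simpa, fun i hi => ?_⟩
    exfalso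
    have : (i : ℕ) + 1 < 1 := by simpa using hi
    omega

lemma fhp_eq_singleton {s : S} (hs : s ∈ R) {l : List S} (h : FirstHitPath R s l) :
    l = [s] := by
  obtain ⟨h1, hne, hlast, hint⟩ := h
  rcases l with _ | ⟨a, l'⟩
  · exact absurd rfl hne
  · simp at h1; subst h1
    rcases l' with _ | ⟨b, l''⟩
    · rfl
    · exact absurd hs (hint ⟨0, by simp⟩ (by simp))

lemma fhp_cons {s : S} (hs : s ∉ R) (b : S) (l : List S) :
    FirstHitPath R s (s :: b :: l) ↔ FirstHitPath R b (b :: l) := by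
  constructor
  · rintro ⟨-, hne, hlast, hint⟩
    refine ⟨rfl, List.cons_ne_nil _ _, ?_, ?_⟩
    · rwa [List.getLast_cons (List.cons_ne_nil b l)] at hlast
    · intro i hi
      have h2 := hint i.succ
        (by simp only [List.length_cons, Fin.val_succ] at hi ⊢; omega)
      exact h2
  · rintro ⟨-, hne, hlast, hint⟩
    refine ⟨rfl, List.cons_ne_nil _ _, ?_, ?_⟩
    · rwa [List.getLast_cons (List.cons_ne_nil b l)]
    · intro i hi
      induction i using Fin.cases with
      | zero => exact hs
      | succ i =>
          have h2 := hint i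
            (by simp only [List.length_cons, Fin.val_succ] at hi ⊢; omega)
          exact h2

/-- prob of hitting R within n steps -/
def hb (P : S → S → ℝ≥0∞) (R : Set S) (n : ℕ) (s : S) : ℝ≥0∞ :=
  ∑' l : List S, if FirstHitPath R s l ∧ l.length ≤ n + 1 then pathProb P l else 0

lemma hb_mem {s : S} (hs : s ∈ R) (n : ℕ) : hb P R n s = 1 := by
  rw [hb, tsum_eq_single [s]]
  · rw [if_pos ⟨(fhp_singleton R s).2 hs, by simp⟩]
    rfl
  · intro l hl
    rw [if_neg]
    rintro ⟨h1, -⟩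
    exact hl (fhp_eq_singleton R hs h1)

lemma hb_zero_not {s : S} (hs : s ∉ R) : hb P R 0 s = 0 := by
  rw [hb]
  convert tsum_zero with l
  rw [if_neg]
  rintro ⟨⟨h1, hne, hlast, -⟩, hlen⟩
  rcases l with _ | ⟨a, l'⟩
  · exact hne rfl
  · simp at h1; subst h1
    have : l' = [] := by
      simp only [List.length_cons] at hlen
      exact List.length_eq_zero_iff.1 (by omega)
    subst this
    exact hs (by simpa using hlast)

lemma hb_succ {s : S} (hs : s ∉ R) (n : ℕ) :
    hb P R (n+1) s = ∑' s', P s s' * hb P R n s' := by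
  set F : List S → ℝ≥0∞ := fun l =>
    if FirstHitPath R s l ∧ l.length ≤ n + 1 + 1 then pathProb P l else 0 with hF
  have h0 : F [] = 0 := by
    simp only [hF]; rw [if_neg]; rintro ⟨h, -⟩; exact fhp_nil R s h
  rw [hb, tsum_cons_eq F h0, ENNReal.tsum_prod']
  have hstep1 : ∀ a : S, (∑' l' : List S, F (a :: l')) =
      if a = s then ∑' l' : List S, F (s :: l') else 0 := by
    intro a
    by_cases ha : a = s
    · rw [if_pos ha, ha]
    · rw [if_neg ha]
      convert tsum_zero with l'
      simp only [hF]
      rw [if_neg]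
      rintro ⟨⟨h1, -⟩, -⟩
      simp at h1; exact ha h1
  rw [tsum_congr hstep1, tsum_ite_eq]
  have key : ∀ l' : List S, F (s :: l') =
      ∑' s', P s s' * (if FirstHitPath R s' l' ∧ l'.length ≤ n + 1
        then pathProb P l' else 0) := by
    intro l'
    rcases l' with _ | ⟨b, l''⟩
    · rw [show F (s :: ([] : List S)) = 0 by
        simp only [hF]; rw [if_neg]
        rintro ⟨h, -⟩
        exact hs ((fhp_singleton R s).1 h)]
      symm; convert tsum_zero with s'
      rw [if_neg, mul_zero]
      rintro ⟨h, -⟩; exact fhp_nil R s' h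
    · rw [tsum_eq_single b ?side]
      case side =>
        intro s' hs'
        rw [if_neg, mul_zero]
        rintro ⟨⟨h1, -⟩, -⟩
        simp at h1; exact hs' h1.symm
      rw [mul_ite, mul_zero]
      simp only [hF]
      by_cases hc : FirstHitPath R b (b :: l'') ∧ (b :: l'').length ≤ n + 1
      · rw [if_pos, if_pos hc]
        · rfl
        · exact ⟨(fhp_cons R hs b l'').2 hc.1,
            by simp only [List.length_cons] at hc ⊢; omega⟩
      · rw [if_neg, if_neg hc]
        rintro ⟨h1, h2⟩
        exact hc ⟨(fhp_cons R hs b l'').1 h1,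
          by simp only [List.length_cons] at h2 ⊢; omega⟩
  rw [tsum_congr key, ENNReal.tsum_comm]
  refine tsum_congr fun s' => ?_
  rw [hb]
  exact ENNReal.tsum_mul_left

/-- survival prob as pS -/
def svS (P : S → S → ℝ≥0∞) (R : Set S) (n : ℕ) (s : S) : ℝ≥0∞ :=
  pS P (fun _ x => x ∉ R) n s

lemma svS_zero_mem {s : S} (hs : s ∈ R) (n : ℕ) : svS P R n s = 0 :=
  pS_zero_of_not P (by simpa using hs) n

lemma svS_succ {s : S} (hs : s ∉ R) (n : ℕ) :
    svS P R (n+1) s = ∑' s', P s s' * svS P R n s' := by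
  rw [svS, pS_succ, if_pos hs]
  rfl

lemma hb_add_svS (hP : IsStochastic P) : ∀ (n : ℕ) (s : S),
    hb P R n s + svS P R n s = 1 := by
  intro n
  induction n with
  | zero =>
    intro s
    by_cases hs : s ∈ R
    · rw [hb_mem P R hs, svS_zero_mem P R hs, add_zero]
    · rw [hb_zero_not P R hs, zero_add, svS, pS_zero, if_pos hs]
  | succ n ih =>
    intro s
    by_cases hs : s ∈ R
    · rw [hb_mem P R hs, svS_zero_mem P R hs, add_zero]
    · rw [hb_succ P R hs, svS_succ P R hs, ← ENNReal.tsum_add]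
      calc ∑' s', (P s s' * hb P R n s' + P s s' * svS P R n s')
          = ∑' s', P s s' := tsum_congr fun s' => by
            rw [← mul_add, ih s', mul_one]
        _ = 1 := hP s

lemma surviveProb_eq_svS (n : ℕ) (s : S) :
    surviveProb P R s n = svS P R n s := by
  rw [surviveProb, svS, pS]
  refine Eq.trans (tsum_subtype {l : List S | l.length = n + 1 ∧ l.head? = some s ∧
    ∀ x ∈ l, x ∉ R} (fun l => pathProb P l)) ?_
  refine tsum_congr fun l => ?_
  have hiff : (l ∈ {l : List S | l.length = n + 1 ∧ l.head? = some s ∧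
      ∀ x ∈ l, x ∉ R}) ↔ (l.length = n + 1 ∧ l.head? = some s ∧
      ∀ i : Fin l.length, l.get i ∉ R) := by
    simp only [Set.mem_setOf_eq]
    refine and_congr_right fun _ => and_congr_right fun _ => ?_
    constructor
    · intro h i
      exact h _ (l.get_mem i)
    · intro h x hx
      obtain ⟨i, rfl⟩ := List.mem_iff_get.1 hx
      exact h i
  by_cases h : l.length = n + 1 ∧ l.head? = some s ∧
      ∀ i : Fin l.length, l.get i ∉ R
  · rw [Set.indicator_of_mem (hiff.2 h), if_pos h]
  · rw [Set.indicator_of_notMem (fun hm => h (hiff.1 hm)), if_neg h]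

end
end StmtAux
namespace StmtAux
noncomputable section
variable {S : Type*} (P : S → S → ℝ≥0∞) (R : Set S)

lemma pS_congr {Q Q' : ℕ → S → Prop} (h : ∀ t x, Q t x ↔ Q' t x) (n : ℕ) (s : S) :
    pS P Q n s = pS P Q' n s :=
  le_antisymm (pS_mono P (fun t x hx => (h t x).1 hx) n s)
    (pS_mono P (fun t x hx => (h t x).2 hx) n s)

lemma hb_le_one (hP : IsStochastic P) (n : ℕ) (s : S) : hb P R n s ≤ 1 := by
  rw [← hb_add_svS P R hP n s]
  exact le_self_add

lemma reachProb_eq_tsum (s : S) :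
    reachProb P R s = ∑' l : List S,
      if FirstHitPath R s l then pathProb P l else 0 := by
  rw [reachProb]
  refine Eq.trans (tsum_subtype {l : List S | FirstHitPath R s l}
    (fun l => pathProb P l)) ?_
  refine tsum_congr fun l => ?_
  by_cases h : FirstHitPath R s l
  · rw [Set.indicator_of_mem (show l ∈ {l : List S | FirstHitPath R s l} from h),
      if_pos h]
  · rw [Set.indicator_of_notMem
      (show l ∉ {l : List S | FirstHitPath R s l} from h), if_neg h]

lemma hb_le_reachProb (n : ℕ) (s : S) : hb P R n s ≤ reachProb P R s := by
  rw [reachProb_eq_tsum, hb]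
  refine ENNReal.tsum_le_tsum fun l => ?_
  split_ifs with h1 h2
  · exact le_refl _
  · exact absurd h1.1 h2
  · exact zero_le
  · exact le_refl _

lemma reachProb_le_one (hP : IsStochastic P) (s : S) : reachProb P R s ≤ 1 := by
  rw [reachProb]
  refine Summable.tsum_le_of_sum_le ENNReal.summable fun F => ?_
  set N := F.sup (fun x => x.1.length) with hN
  have h1 : ∑ x ∈ F, pathProb P x.1 ≤ hb P R N s := by
    rw [hb]
    have he : ∑ x ∈ F, pathProb P x.1 = ∑ l ∈ F.image Subtype.val,
        (if FirstHitPath R s l ∧ l.length ≤ N + 1 then pathProb P l else 0) := by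
      rw [Finset.sum_image (by exact fun x _ y _ h => Subtype.ext h)]
      refine Finset.sum_congr rfl fun x hx => ?_
      rw [if_pos ⟨x.2, by
        have h3 : (↑x : List S).length ≤ N := by
          simpa using Finset.le_sup (f := fun x : {l : List S // FirstHitPath R s l} =>
            x.1.length) hx
        omega⟩]
    rw [he]
    exact ENNReal.sum_le_tsum _
  exact le_trans h1 (hb_le_one P R hP N s)

lemma exists_hb_pos {s : S} (h : 0 < reachProb P R s) :
    ∃ n : ℕ, 0 < hb P R n s := by
  have h2 : ¬ ∀ l : {l : List S // FirstHitPath R s l}, pathProb P l.1 = 0 := by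
    intro hall
    rw [reachProb, ENNReal.tsum_eq_zero.2 hall] at h
    exact lt_irrefl 0 h
  push_neg at h2
  obtain ⟨l, hl⟩ := h2
  refine ⟨l.1.length, lt_of_lt_of_le (pos_iff_ne_zero.2 hl) ?_⟩
  calc pathProb P l.1
      = (if FirstHitPath R s l.1 ∧ l.1.length ≤ l.1.length + 1
          then pathProb P l.1 else 0) := by rw [if_pos ⟨l.2, by omega⟩]
    _ ≤ hb P R l.1.length s := by rw [hb]; exact ENNReal.le_tsum _

lemma exists_svS_lt_one (hP : IsStochastic P) {s : S} (h : 0 < reachProb P R s) :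
    ∃ n : ℕ, svS P R n s < 1 := by
  obtain ⟨n, hn⟩ := exists_hb_pos P R h
  refine ⟨n, ?_⟩
  have hsum := hb_add_svS P R hP n s
  have hle : svS P R n s ≤ 1 := pS_le_one P hP _ n s
  refine lt_of_le_of_ne hle fun heq => ?_
  rw [heq] at hsum
  have h1 : hb P R n s + 1 ≤ 0 + 1 := by rw [hsum, zero_add]
  have h0 : hb P R n s = 0 :=
    le_antisymm ((ENNReal.add_le_add_iff_right
      (by norm_num : (1:ℝ≥0∞) ≠ ∞)).1 h1) (zero_le)
  rw [h0] at hn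
  exact lt_irrefl 0 hn

lemma confineProb_eq (A : Set S) (s : S) (m : ℕ) :
    confineProb P A s m = ⨅ n : ℕ, pS P (fun t x => m ≤ t → x ∈ A) n s := by
  rw [confineProb]
  refine iInf_congr fun n => ?_
  rw [pS]
  refine Eq.trans (tsum_subtype {l : List S | l.length = n + 1 ∧ l.head? = some s ∧
    ∀ i : Fin l.length, m ≤ (i : ℕ) → l.get i ∈ A} (fun l => pathProb P l)) ?_
  refine tsum_congr fun l => ?_
  by_cases h : l.length = n + 1 ∧ l.head? = some s ∧
      ∀ i : Fin l.length, m ≤ (i : ℕ) → l.get i ∈ A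
  · rw [Set.indicator_of_mem (show l ∈ {l : List S | l.length = n + 1 ∧
        l.head? = some s ∧ ∀ i : Fin l.length, m ≤ (i : ℕ) → l.get i ∈ A} from h),
      if_pos h]
  · rw [Set.indicator_of_notMem (show l ∉ {l : List S | l.length = n + 1 ∧
        l.head? = some s ∧ ∀ i : Fin l.length, m ≤ (i : ℕ) → l.get i ∈ A} from h),
      if_neg h]

end
end StmtAux

section Thms

variable {S : Type*}

open StmtAux

theorem stmt3 [Countable S] (P : S → S → ℝ≥0∞) (hP : IsStochastic P)
    (R : Set S) (s₀ : S) (hreach : ∀ s, 0 < reachProb P R s)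
    (hconf : ∀ δ : ℝ≥0∞, 0 < δ →
      ∃ (A : Set S) (m : ℕ), A.Finite ∧ 1 - δ < confineProb P A s₀ m) :
    reachProb P R s₀ = 1 := by
  have hanti : ∀ s : S, Antitone (fun n => svS P R n s) := fun s =>
    antitone_nat_of_succ_le (fun n => pS_antitone P hP (fun x => x ∉ R) n s)
  have hinf : (⨅ n : ℕ, svS P R n s₀) = 0 := by
    refine le_antisymm ?_ (zero_le)
    refine ENNReal.le_of_forall_pos_le_add fun ε hε _ => ?_
    rw [zero_add]
    obtain ⟨A0, m, hA0, hcp0⟩ := hconf ε (ENNReal.coe_pos.2 hε)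
    set A : Set S := insert s₀ A0 with hA
    have hAfin : A.Finite := hA0.insert s₀
    have hcp : 1 - (ε : ℝ≥0∞) < confineProb P A s₀ m := by
      refine lt_of_lt_of_le hcp0 ?_
      rw [confineProb_eq, confineProb_eq]
      exact iInf_mono fun n =>
        pS_mono P (fun t x hx hm => Set.mem_insert_of_mem _ (hx hm)) n s₀
    have hex : ∀ s : S, ∃ n, svS P R n s < 1 := fun s =>
      exists_svS_lt_one P R hP (hreach s)
    set nf : S → ℕ := fun s => (hex s).choose with hnf
    set k : ℕ := hAfin.toFinset.sup nf with hk
    set β : ℝ≥0∞ := hAfin.toFinset.sup (fun s => svS P R k s) with hβ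
    have hβlt : β < 1 := by
      rw [hβ]
      refine (Finset.sup_lt_iff (by norm_num)).2 fun s _hs => ?_
      refine lt_of_le_of_lt (hanti s (Finset.le_sup (f := nf) _hs)) ?_
      exact (hex s).choose_spec
    have hβb : ∀ s ∈ A, svS P R k s ≤ β := fun s hs =>
      Finset.le_sup (f := fun s => svS P R k s) (hAfin.mem_toFinset.2 hs)
    set Qg : ℕ → S → Prop := fun t x => x ∉ R ∧ (m ≤ t → x ∈ A) with hQg
    have hβall : ∀ s', pS P (fun _ x => x ∉ R ∧ x ∈ A) k s' ≤ β := by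
      intro s'
      by_cases hx : s' ∉ R ∧ s' ∈ A
      · calc pS P (fun _ x => x ∉ R ∧ x ∈ A) k s'
            ≤ svS P R k s' := pS_mono P (fun t x h => h.1) k s'
          _ ≤ β := hβb s' hx.2
      · rw [pS_zero_of_not P hx]
        exact zero_le
    have hg : ∀ j : ℕ, pS P Qg (m + j * k) s₀ ≤ β ^ j := by
      intro j
      induction j with
      | zero => simpa using pS_le_one P hP Qg m s₀
      | succ j ih =>
        have e : m + (j + 1) * k = (m + j * k) + k := by ring
        rw [e, pow_succ]
        calc pS P Qg ((m + j * k) + k) s₀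
            ≤ β * pS P Qg (m + j * k) s₀ := by
              refine pS_shift_le P k β (m + j * k) Qg s₀ fun t s' ht => ?_
              have hcg : pS P (fun u => Qg (t + u)) k s' =
                  pS P (fun _ x => x ∉ R ∧ x ∈ A) k s' := by
                refine pS_congr P (fun u x => ?_) k s'
                simp only [hQg]
                refine and_congr_right fun _ => ?_
                constructor
                · intro h2; exact h2 (by omega)
                · intro h2 _; exact h2
              rw [hcg]
              exact hβall s'
          _ ≤ β * β ^ j := mul_le_mul_right ih β
          _ = β ^ j * β := mul_comm _ _
    set dd : ℕ → ℝ≥0∞ := fun N => ∑' l : List S,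
      if l.length = N + 1 ∧ l.head? = some s₀ ∧
        ¬(∀ i : Fin l.length, m ≤ (i : ℕ) → l.get i ∈ A)
      then pathProb P l else 0 with hdd_def
    have hsplit : ∀ N : ℕ, svS P R N s₀ ≤ pS P Qg N s₀ + dd N := by
      intro N
      rw [svS, pS, pS, hdd_def, ← ENNReal.tsum_add]
      refine ENNReal.tsum_le_tsum fun l => ?_
      by_cases h1 : l.length = N + 1 ∧ l.head? = some s₀ ∧
          ∀ i : Fin l.length, l.get i ∉ R
      · obtain ⟨hL, hH, havoid⟩ := h1
        rw [if_pos ⟨hL, hH, havoid⟩]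
        by_cases hc : ∀ i : Fin l.length, m ≤ (i : ℕ) → l.get i ∈ A
        · rw [if_pos ⟨hL, hH, fun i => ⟨havoid i, fun hm => hc i hm⟩⟩]
          exact le_self_add
        · rw [if_neg (fun h => hc fun i hm => (h.2.2 i).2 hm), if_pos ⟨hL, hH, hc⟩]
          exact le_add_self
      · rw [if_neg h1]
        exact zero_le
    have hccdd : ∀ N : ℕ, pS P (fun t x => m ≤ t → x ∈ A) N s₀ + dd N = 1 := by
      intro N
      rw [← pS_top P hP N s₀, pS, pS, hdd_def, ← ENNReal.tsum_add]
      refine tsum_congr fun l => ?_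
      by_cases hb2 : l.length = N + 1 ∧ l.head? = some s₀
      · by_cases hc : ∀ i : Fin l.length, m ≤ (i : ℕ) → l.get i ∈ A
        · rw [if_pos ⟨hb2.1, hb2.2, hc⟩, if_neg (fun h => h.2.2 hc), add_zero,
            if_pos ⟨hb2.1, hb2.2, fun _ => trivial⟩]
        · rw [if_neg (fun h => hc h.2.2), if_pos ⟨hb2.1, hb2.2, hc⟩, zero_add,
            if_pos ⟨hb2.1, hb2.2, fun _ => trivial⟩]
      · rw [if_neg (fun h => hb2 ⟨h.1, h.2.1⟩), if_neg (fun h => hb2 ⟨h.1, h.2.1⟩),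
          if_neg (fun h => hb2 ⟨h.1, h.2.1⟩), add_zero]
    have hcpne : confineProb P A s₀ m ≠ ∞ := by
      have : confineProb P A s₀ m ≤ 1 := by
        rw [confineProb_eq]
        exact le_trans (iInf_le _ 0) (pS_le_one P hP _ 0 s₀)
      exact ne_top_of_le_ne_top (by norm_num) this
    have hdd : ∀ N : ℕ, dd N ≤ (ε : ℝ≥0∞) := by
      intro N
      have h1' : dd N + confineProb P A s₀ m ≤ 1 := by
        calc dd N + confineProb P A s₀ m
            ≤ dd N + pS P (fun t x => m ≤ t → x ∈ A) N s₀ := by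
              refine add_le_add_right ?_ _
              rw [confineProb_eq]
              exact iInf_le _ N
          _ = 1 := by rw [add_comm]; exact hccdd N
      have h2' : (1 : ℝ≥0∞) ≤ (ε : ℝ≥0∞) + confineProb P A s₀ m := by
        calc (1 : ℝ≥0∞) ≤ (1 - (ε : ℝ≥0∞)) + ε := le_tsub_add
          _ ≤ confineProb P A s₀ m + ε := add_le_add_left hcp.le _
          _ = (ε : ℝ≥0∞) + confineProb P A s₀ m := add_comm _ _
      exact (ENNReal.add_le_add_iff_right hcpne).1 (le_trans h1' h2')
    have hle : ∀ j : ℕ, (⨅ n : ℕ, svS P R n s₀) ≤ β ^ j + ε := by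
      intro j
      calc (⨅ n : ℕ, svS P R n s₀) ≤ svS P R (m + j * k) s₀ := iInf_le _ _
        _ ≤ pS P Qg (m + j * k) s₀ + dd (m + j * k) := hsplit _
        _ ≤ β ^ j + ε := add_le_add (hg j) (hdd _)
    have htend : Filter.Tendsto (fun j : ℕ => β ^ j + (ε : ℝ≥0∞)) Filter.atTop
        (nhds (0 + (ε : ℝ≥0∞))) :=
      (ENNReal.tendsto_pow_atTop_nhds_zero_of_lt_one hβlt).add tendsto_const_nhds
    have := ge_of_tendsto' htend hle
    rwa [zero_add] at this
  refine le_antisymm (reachProb_le_one P R hP s₀) ?_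
  have h1n : ∀ n : ℕ, 1 - svS P R n s₀ ≤ reachProb P R s₀ := by
    intro n
    have hs := hb_add_svS P R hP n s₀
    have h2 : 1 - svS P R n s₀ ≤ hb P R n s₀ := by
      rw [tsub_le_iff_right]
      exact hs.ge
    exact le_trans h2 (hb_le_reachProb P R n s₀)
  calc (1 : ℝ≥0∞) = 1 - ⨅ n : ℕ, svS P R n s₀ := by rw [hinf, tsub_zero]
    _ = ⨆ n : ℕ, (1 - svS P R n s₀) := ENNReal.sub_iInf
    _ ≤ reachProb P R s₀ := iSup_le h1n


end Thms
end

section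
/- Let C=(S,P) be a countable Markov chain with target T ⊆ F ⊆ S (T absorbing), C' a biased Markov chain of (C,T,F), and γ the likelihood function (γ(ρ) = Pr_C(ρ)/Pr_{C'}(ρ) for paths avoiding s₋, and 0 otherwise). For a computable nonnegative reward function L on finite paths, set L' = L·γ. Then the expected reward E(f_{L',T}(ϱ^{C',s₀})) in C' equals the expected reward E(f_{L,T}(ϱ^{C,s₀})) in C, for any s₀ ∉ Av_C(F). -/
open scoped ENNReal NNReal BigOperators
open Filter

open scoped Classical

section Aux

variable {S A B : Type*}

lemma entry_le_one {P : S → S → ℝ≥0∞} (hP : IsStochastic P) (a b : S) : P a b ≤ 1 := by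
  rw [← hP a]; exact ENNReal.le_tsum b

lemma pathProb_le_one {P : S → S → ℝ≥0∞} (hP : ∀ a b, P a b ≤ 1) :
    ∀ l : List S, pathProb P l ≤ 1
  | [] => le_refl _
  | [_] => le_refl _
  | a :: b :: l => by
      simp only [pathProb]
      exact mul_le_one' (hP a b) (pathProb_le_one hP (b :: l))

lemma pathProb_map (Q : B → B → ℝ≥0∞) (φ : A → B) :
    ∀ l : List A, pathProb Q (l.map φ) = pathProb (fun a b => Q (φ a) (φ b)) l
  | [] => rfl
  | [_] => rfl
  | a :: b :: l => by
      simp only [List.map_cons, pathProb]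
      rw [← List.map_cons, pathProb_map Q φ (b :: l)]

lemma pathProb_ne_zero {Q Q' : A → A → ℝ≥0∞} (h : ∀ a b, 0 < Q a b → 0 < Q' a b) :
    ∀ l : List A, pathProb Q l ≠ 0 → pathProb Q' l ≠ 0
  | [] => by simp [pathProb]
  | [_] => by simp [pathProb]
  | a :: b :: l => by
      simp only [pathProb, mul_ne_zero_iff]
      rintro ⟨h1, h2⟩
      exact ⟨(h a b (pos_iff_ne_zero.2 h1)).ne', pathProb_ne_zero h (b :: l) h2⟩

lemma pathProb_le_drop {P : S → S → ℝ≥0∞} (hP : ∀ a b, P a b ≤ 1) :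
    ∀ (l : List S) (k : ℕ), pathProb P l ≤ pathProb P (l.drop k)
  | _, 0 => le_rfl
  | [], _ + 1 => le_rfl
  | [_], _ + 1 => by simp [pathProb]
  | a :: b :: l, k + 1 => by
      simp only [List.drop_succ_cons]
      refine le_trans ?_ (pathProb_le_drop hP (b :: l) k)
      simp only [pathProb]
      calc P a b * pathProb P (b :: l) ≤ 1 * pathProb P (b :: l) :=
            mul_le_mul_left (hP a b) _
        _ = pathProb P (b :: l) := one_mul _

lemma pathProb_le_take {P : S → S → ℝ≥0∞} (hP : ∀ a b, P a b ≤ 1) :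
    ∀ (l : List S) (k : ℕ), pathProb P l ≤ pathProb P (l.take k)
  | [], _ => by simp [pathProb]
  | [a], k => by cases k <;> simp [pathProb]
  | a :: b :: l, 0 => by
      simpa [pathProb] using pathProb_le_one hP (a :: b :: l)
  | a :: b :: l, 1 => by
      simpa [pathProb] using pathProb_le_one hP (a :: b :: l)
  | a :: b :: l, (k + 2) => by
      show P a b * pathProb P (b :: l) ≤ pathProb P (a :: b :: (b::l).tail.take k)
      have : pathProb P (a :: b :: (b::l).tail.take k)
          = P a b * pathProb P ((b :: l).take (k + 1)) := rfl
      rw [this]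
      exact mul_le_mul_right (pathProb_le_take hP (b :: l) (k + 1)) _

lemma firstHitPath_iff (U : Set A) (s : A) (l : List A) (h0 : l ≠ []) :
    FirstHitPath U s l ↔ (l.head? = some s ∧ l.getLast h0 ∈ U ∧
      ∀ i (h : i + 1 < l.length), l[i]'(by omega) ∉ U) := by
  constructor
  · rintro ⟨h1, _, hlast, hmid⟩
    exact ⟨h1, hlast, fun i h => hmid ⟨i, by omega⟩ h⟩
  · rintro ⟨h1, hlast, hmid⟩
    exact ⟨h1, h0, hlast, fun i h => hmid i h⟩

lemma firstHitPath_map {φ : A → B} (hφ : Function.Injective φ) (U : Set B) (s : A)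
    (l : List A) : FirstHitPath U (φ s) (l.map φ) ↔ FirstHitPath (φ ⁻¹' U) s l := by
  rcases eq_or_ne l [] with rfl | h0
  · constructor <;> (rintro ⟨_, h, _⟩ ; exact absurd rfl h)
  · rw [firstHitPath_iff U (φ s) (l.map φ) (by simpa using h0),
      firstHitPath_iff (φ ⁻¹' U) s l h0]
    have hhead : (l.map φ).head? = some (φ s) ↔ l.head? = some s := by
      rw [List.head?_map, Option.map_eq_some_iff]
      constructor
      · rintro ⟨a, ha, hb⟩; rwa [hφ hb] at ha
      · intro h; exact ⟨s, h, rfl⟩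
    have hlast : (l.map φ).getLast (by simpa using h0) = φ (l.getLast h0) := by
      rw [List.getLast_eq_getElem, List.getLast_eq_getElem]
      simp [List.getElem_map]
    rw [hhead, hlast]
    refine and_congr Iff.rfl (and_congr Iff.rfl ?_)
    constructor
    · intro h i hi
      have := h i (by simpa using hi)
      simpa [List.getElem_map] using this
    · intro h i hi
      have hi' : i + 1 < l.length := by simpa using hi
      have := h i hi'
      simpa [List.getElem_map] using this

lemma reduceOption_map_some : ∀ (l : List (Option A)), none ∉ l →
    l.reduceOption.map some = l
  | [], _ => rfl
  | none :: l, h => absurd List.mem_cons_self h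
  | some a :: l, h => by
      rw [List.reduceOption_cons_of_some, List.map_cons,
        reduceOption_map_some l (fun hc => h (List.mem_cons_of_mem _ hc))]

lemma reachProb_ne_zero_of_path {P : S → S → ℝ≥0∞} {T : Set S} {s : S} {l : List S}
    (hfp : FirstHitPath T s l) (hp : pathProb P l ≠ 0) : reachProb P T s ≠ 0 := by
  intro hc
  rw [reachProb] at hc
  have h := ENNReal.le_tsum
    (f := fun l : {l : List S // FirstHitPath T s l} => pathProb P (l : List S)) ⟨l, hfp⟩
  rw [hc] at h
  exact hp (le_antisymm h zero_le)

lemma exists_path_of_reach {P : S → S → ℝ≥0∞} {T : Set S} {s : S}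
    (h : reachProb P T s ≠ 0) : ∃ l, FirstHitPath T s l ∧ pathProb P l ≠ 0 := by
  by_contra hc
  push_neg at hc
  exact h (ENNReal.tsum_eq_zero.2 fun x => hc x.1 x.2)

lemma head?_take_succ : ∀ (l : List A) (k : ℕ), (l.take (k + 1)).head? = l.head?
  | [], _ => rfl
  | a :: l, _ => rfl

lemma reachF_ne_zero {P : S → S → ℝ≥0∞} (hP : ∀ a b, P a b ≤ 1) {T F : Set S}
    (hTF : T ⊆ F) {s : S} (h : reachProb P T s ≠ 0) : reachProb P F s ≠ 0 := by
  obtain ⟨l, hfp, hp⟩ := exists_path_of_reach h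
  obtain ⟨hhead, hne, hlast, _⟩ := hfp
  have hlen : 0 < l.length := List.length_pos_iff.2 hne
  have hex : ∃ j, ∃ hj : j < l.length, l[j] ∈ F :=
    ⟨l.length - 1, by omega, by
      rw [List.getLast_eq_getElem] at hlast; exact hTF hlast⟩
  classical
  let j := Nat.find hex
  obtain ⟨hj, hjF⟩ := Nat.find_spec hex
  have hjmin : ∀ i (hi : i < l.length), i < j → l[i] ∉ F := by
    intro i hi hij hiF
    exact Nat.find_min hex hij ⟨hi, hiF⟩
  set lp := l.take (j + 1) with hlp
  have hlplen : lp.length = j + 1 := by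
    simp [hlp, Nat.min_eq_left (by omega : j + 1 ≤ l.length)]
  have hlpne : lp ≠ [] := by
    intro hc; rw [hc] at hlplen; simp at hlplen
  have hfp' : FirstHitPath F s lp := by
    rw [firstHitPath_iff F s lp hlpne]
    refine ⟨?_, ?_, ?_⟩
    · rw [hlp, head?_take_succ]; exact hhead
    · rw [List.getLast_eq_getElem]
      have : lp[lp.length - 1]'(by omega) = l[j]'hj := by
        simp only [hlplen, Nat.add_sub_cancel]
        exact List.getElem_take ..
      rw [this]; exact hjF
    · intro i hi
      have hij : i < j := by omega
      have : lp[i]'(by omega) = l[i]'(by omega) := List.getElem_take ..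
      rw [this]
      exact hjmin i (by omega) hij
  refine reachProb_ne_zero_of_path hfp' ?_
  intro hc
  exact hp (le_antisymm (le_trans (pathProb_le_take hP l (j + 1)) hc.le) zero_le)

lemma reachT_ne_zero_of_mem {P : S → S → ℝ≥0∞} (hP : ∀ a b, P a b ≤ 1) {T : Set S}
    {s : S} {l : List S} (hfp : FirstHitPath T s l) (hp : pathProb P l ≠ 0)
    (i : ℕ) (hi : i < l.length) : reachProb P T (l[i]) ≠ 0 := by
  obtain ⟨hhead, hne, hlast, hmid⟩ := hfp
  set ld := l.drop i with hld
  have hldlen : ld.length = l.length - i := by simp [hld]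
  have hldne : ld ≠ [] := by
    intro hc; rw [hc] at hldlen; simp at hldlen; omega
  have hfp' : FirstHitPath T (l[i]) ld := by
    rw [firstHitPath_iff T _ ld hldne]
    refine ⟨?_, ?_, ?_⟩
    · rw [hld, List.head?_drop]; exact List.getElem?_eq_getElem hi
    · rw [List.getLast_eq_getElem]
      have h1 : ld[ld.length - 1]'(by omega) = l[i + (ld.length - 1)]'(by omega) :=
        List.getElem_drop ..
      have h2 : l[i + (ld.length - 1)]'(by omega) = l[l.length - 1]'(by omega) := by
        congr 1; omega
      rw [List.getLast_eq_getElem] at hlast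
      rw [h1, h2]; exact hlast
    · intro k hk
      have h1 : ld[k]'(by omega) = l[i + k]'(by omega) := List.getElem_drop ..
      rw [h1]
      exact hmid ⟨i + k, by omega⟩ (by simp; omega)
  refine reachProb_ne_zero_of_path hfp' ?_
  intro hc
  exact hp (le_antisymm (le_trans (pathProb_le_drop hP l i) hc.le) zero_le)

end Aux

section Thms

variable {S : Type*}

theorem stmt6 [Countable S] (P : S → S → ℝ≥0∞) (hP : IsStochastic P)
    (T F : Set S) (hTF : T ⊆ F) (habsT : ∀ s ∈ T, P s s = 1)
    (P' : Option (SA P F) → Option (SA P F) → ℝ≥0∞)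
    (hb : IsBiased P T F P')
    (L : List S → ℝ≥0∞) (s₀ : SA P F) :
    expReward P'
      (fun l => if none ∈ l then 0 else
        L (l.reduceOption.map Subtype.val) *
          (pathProb P (l.reduceOption.map Subtype.val) / pathProb P' l))
      {x : Option (SA P F) | ∃ s : SA P F, x = some s ∧ s.val ∈ T}
      (some s₀)
    = expReward P L T s₀.val := by
  classical
  have hPle : ∀ a b, P a b ≤ 1 := entry_le_one hP
  have hP'le : ∀ a b, P' a b ≤ 1 := entry_le_one hb.1
  set T' : Set (Option (SA P F)) := {x | ∃ s : SA P F, x = some s ∧ s.val ∈ T} with hT'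
  have hpre : (some : SA P F → Option (SA P F)) ⁻¹' T' = Subtype.val ⁻¹' T := by
    ext x
    show (∃ s : SA P F, some x = some s ∧ s.val ∈ T) ↔ x.val ∈ T
    constructor
    · rintro ⟨s, hs, hsT⟩
      obtain rfl := Option.some_injective _ hs
      exact hsT
    · intro h
      exact ⟨x, rfl, h⟩
  have hfhp : ∀ m : List (SA P F),
      FirstHitPath T' (some s₀) (m.map some) ↔ FirstHitPath T s₀.val (m.map Subtype.val) := by
    intro m
    rw [firstHitPath_map (Option.some_injective _), hpre,
      ← firstHitPath_map Subtype.val_injective]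
  have hpp : ∀ m : List (SA P F), pathProb P (m.map Subtype.val) ≠ 0 →
      pathProb P' (m.map some) ≠ 0 := by
    intro m hm
    rw [pathProb_map] at hm ⊢
    exact pathProb_ne_zero (fun a b h => hb.2.2.2 a b h) m hm
  have hppt : ∀ l : List (Option (SA P F)), pathProb P' l ≠ ⊤ :=
    fun l => (lt_of_le_of_lt (pathProb_le_one hP'le l) ENNReal.one_lt_top).ne
  rw [expReward, expReward]
  set g : {l : List (Option (SA P F)) // FirstHitPath T' (some s₀) l} → ℝ≥0∞ := fun l =>
    (if none ∈ l.val then 0 else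
      L (l.val.reduceOption.map Subtype.val) *
        (pathProb P (l.val.reduceOption.map Subtype.val) / pathProb P' l.val))
      * pathProb P' l.val with hgdef
  have hnone : ∀ x : Function.support g, none ∉ x.val.val := by
    rintro ⟨x, hx⟩ hmem
    apply hx
    show (if none ∈ x.val then 0 else
      L (x.val.reduceOption.map Subtype.val) *
        (pathProb P (x.val.reduceOption.map Subtype.val) / pathProb P' x.val))
      * pathProb P' x.val = 0
    rw [if_pos hmem, zero_mul]
  have hrec : ∀ x : Function.support g, (x.val.val.reduceOption.map some) = x.val.val :=
    fun x => reduceOption_map_some _ (hnone x)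
  let i : Function.support g → {l : List S // FirstHitPath T s₀.val l} := fun x =>
    ⟨x.val.val.reduceOption.map Subtype.val, by
      have h := x.val.prop
      rw [← hrec x] at h
      exact (hfhp _).mp h⟩
  have hi : Function.Injective i := by
    intro x y hxy
    have h1 : x.val.val.reduceOption.map Subtype.val
        = y.val.val.reduceOption.map Subtype.val := congrArg Subtype.val hxy
    have h2 : x.val.val.reduceOption = y.val.val.reduceOption :=
      List.map_injective_iff.2 Subtype.val_injective h1
    have h3 : x.val.val = y.val.val := by rw [← hrec x, ← hrec y, h2]
    exact Subtype.ext (Subtype.ext h3)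
  have hsupp : Function.support (fun l : {l : List S // FirstHitPath T s₀.val l} =>
      L l.val * pathProb P l.val) ⊆ Set.range i := by
    rintro ⟨l, hfp⟩ hl
    simp only [Function.mem_support] at hl
    have hL : L l ≠ 0 := fun hc => hl (by rw [hc, zero_mul])
    have hp : pathProb P l ≠ 0 := fun hc => hl (by rw [hc, mul_zero])
    have hmem : ∀ s ∈ l, s ∉ Av P F := by
      intro s hs hAv
      obtain ⟨k, hk, rfl⟩ := List.getElem_of_mem hs
      exact reachF_ne_zero hPle hTF (reachT_ne_zero_of_mem hPle hfp hp k hk) hAv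
    set m : List (SA P F) := l.attach.map (fun x => ⟨x.val, hmem x.val x.prop⟩) with hm
    have hmval : m.map Subtype.val = l := by
      rw [hm, List.map_map]
      exact List.attach_map_subtype_val l
    have hfp' : FirstHitPath T' (some s₀) (m.map some) :=
      (hfhp m).mpr (by rw [hmval]; exact hfp)
    have hpP' : pathProb P' (m.map some) ≠ 0 := hpp m (by rw [hmval]; exact hp)
    have hnone' : none ∉ m.map some := by simp [List.mem_map]
    have hred : (m.map some).reduceOption = m :=
      List.map_injective_iff.2 (Option.some_injective _)
        (reduceOption_map_some (m.map some) hnone')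
    have hgx : g ⟨m.map some, hfp'⟩ ≠ 0 := by
      show (if none ∈ m.map some then 0 else
        L ((m.map some).reduceOption.map Subtype.val) *
          (pathProb P ((m.map some).reduceOption.map Subtype.val)
            / pathProb P' (m.map some)))
        * pathProb P' (m.map some) ≠ 0
      rw [if_neg hnone', hred, hmval]
      exact mul_ne_zero (mul_ne_zero hL (ENNReal.div_pos hp (hppt _)).ne') hpP'
    refine ⟨⟨⟨m.map some, hfp'⟩, hgx⟩, ?_⟩
    apply Subtype.ext
    show (m.map some).reduceOption.map Subtype.val = l
    rw [hred, hmval]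
  have hfg : ∀ x : Function.support g, (fun l : {l : List S // FirstHitPath T s₀.val l} =>
      L l.val * pathProb P l.val) (i x) = g x := by
    intro x
    have hn := hnone x
    have hp'0 : pathProb P' x.val.val ≠ 0 := by
      intro hc
      apply x.prop
      show (if none ∈ x.val.val then 0 else
        L (x.val.val.reduceOption.map Subtype.val) *
          (pathProb P (x.val.val.reduceOption.map Subtype.val) / pathProb P' x.val.val))
        * pathProb P' x.val.val = 0
      rw [hc, mul_zero]
    show L (x.val.val.reduceOption.map Subtype.val)
        * pathProb P (x.val.val.reduceOption.map Subtype.val)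
      = (if none ∈ x.val.val then 0 else
          L (x.val.val.reduceOption.map Subtype.val) *
            (pathProb P (x.val.val.reduceOption.map Subtype.val) / pathProb P' x.val.val))
        * pathProb P' x.val.val
    rw [if_neg hn, mul_assoc, ENNReal.div_mul_cancel hp'0 (hppt _)]
  exact (tsum_eq_tsum_of_ne_zero_bij i hi hsupp hfg).symm

end Thms
end

section
/- Let (C^•, F^•) be an α-abstraction of (C, F), i.e., α : S ∖ Av_C(F) → S^• satisfies (A) α(s) ∈ F^• for all s ∈ F, and (B) for all s ∈ S ∖ (F ∪ Av_C(F)), ∑_{s' ∉ Av_C(F)} P(s,s')·μ^•(α(s')) ≤ μ^•(α(s)), where μ^•(x) is the probability of reaching F^• from x in C^•. Then for every s ∈ S ∖ Av_C(F), the probability μ_F(s) of reaching F from s in C satisfies μ_F(s) ≤ μ^•(α(s)); in particular μ^•(α(s)) > 0. -/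
open scoped ENNReal NNReal BigOperators
open Filter

open scoped Classical

section Thms

variable {S : Type*}

/-- Truncated first-hit sum: total probability of first-hit paths of length `≤ n`. -/
noncomputable def fhAux (P : S → S → ℝ≥0∞) (T : Set S) (n : ℕ) (s : S) : ℝ≥0∞ :=
  ∑' l : List S, if FirstHitPath T s l ∧ l.length ≤ n then pathProb P l else 0

lemma reachProb_eq_tsum_ite (P : S → S → ℝ≥0∞) (T : Set S) (s : S) :
    reachProb P T s = ∑' l : List S, if FirstHitPath T s l then pathProb P l else 0 := by
  rw [reachProb]
  exact (tsum_subtype {l : List S | FirstHitPath T s l} (pathProb P)).trans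
    (tsum_congr fun l => by
      by_cases h : FirstHitPath T s l <;> simp [Set.indicator, h])

lemma firstHitPath_singleton_of_mem {T : Set S} {x : S} (hx : x ∈ T) :
    FirstHitPath T x [x] := by
  refine ⟨rfl, by simp, by simpa using hx, fun i hi => ?_⟩
  simp at hi

lemma eq_singleton_of_firstHitPath {T : Set S} {x : S} (hx : x ∈ T) {l : List S}
    (h : FirstHitPath T x l) : l = [x] := by
  obtain ⟨hh, hne, hlast, hmem⟩ := h
  cases l with
  | nil => exact absurd rfl hne
  | cons a t =>
    simp only [List.head?_cons, Option.some.injEq] at hh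
    subst hh
    cases t with
    | nil => rfl
    | cons b u =>
      exfalso
      have := hmem ⟨0, by simp⟩ (by simp)
      simp at this
      exact this hx

lemma reachProb_of_mem (P : S → S → ℝ≥0∞) {T : Set S} {x : S} (hx : x ∈ T) :
    reachProb P T x = 1 := by
  rw [reachProb_eq_tsum_ite]
  calc (∑' l : List S, if FirstHitPath T x l then pathProb P l else 0)
      = ∑' l : List S, if l = [x] then 1 else 0 := by
        refine tsum_congr fun l => ?_
        by_cases h : l = [x]
        · subst h
          rw [if_pos (firstHitPath_singleton_of_mem hx), if_pos rfl]
          rfl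
        · rw [if_neg h, if_neg]
          intro hf
          exact h (eq_singleton_of_firstHitPath hx hf)
    _ = 1 := tsum_ite_eq [x] 1

lemma fhAux_le_reachProb (P : S → S → ℝ≥0∞) (T : Set S) (n : ℕ) (s : S) :
    fhAux P T n s ≤ reachProb P T s := by
  rw [reachProb_eq_tsum_ite, fhAux]
  refine ENNReal.tsum_le_tsum fun l => ?_
  by_cases h : FirstHitPath T s l ∧ l.length ≤ n
  · rw [if_pos h, if_pos h.1]
  · rw [if_neg h]; exact zero_le

lemma fhAux_zero (P : S → S → ℝ≥0∞) (T : Set S) (s : S) : fhAux P T 0 s = 0 := by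
  rw [fhAux]
  convert tsum_zero with l
  rw [if_neg]
  rintro ⟨⟨-, hne, -⟩, hlen⟩
  exact hne (List.length_eq_zero_iff.mp (Nat.le_zero.mp hlen))

lemma fhAux_le_one_of_mem (P : S → S → ℝ≥0∞) {T : Set S} (n : ℕ) {x : S} (hx : x ∈ T) :
    fhAux P T n x ≤ 1 := by
  rw [fhAux]
  calc (∑' l : List S, if FirstHitPath T x l ∧ l.length ≤ n then pathProb P l else 0)
      ≤ ∑' l : List S, if l = [x] then 1 else 0 := by
        refine ENNReal.tsum_le_tsum fun l => ?_
        by_cases h : FirstHitPath T x l ∧ l.length ≤ n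
        · rw [if_pos h, if_pos (eq_singleton_of_firstHitPath hx h.1)]
          rw [eq_singleton_of_firstHitPath hx h.1]
          exact le_of_eq rfl
        · rw [if_neg h]; exact zero_le
    _ = 1 := tsum_ite_eq [x] 1

lemma fhAux_step (P : S → S → ℝ≥0∞) {T : Set S} (n : ℕ) {s : S} (hs : s ∉ T) :
    fhAux P T (n + 1) s ≤ ∑' s' : S, P s s' * fhAux P T n s' := by
  have h1 : fhAux P T (n + 1) s = ∑' l' : List S,
      (if FirstHitPath T s (s :: l') ∧ (s :: l').length ≤ n + 1
        then pathProb P (s :: l') else 0) := by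
    rw [fhAux]
    refine (Function.Injective.tsum_eq List.cons_injective fun l hl => ?_).symm
    have hcond : FirstHitPath T s l ∧ l.length ≤ n + 1 := by
      by_contra hc
      rw [Function.mem_support, if_neg hc] at hl
      exact hl rfl
    obtain ⟨⟨hh, -, -, -⟩, -⟩ := hcond
    cases l with
    | nil => simp at hh
    | cons a t =>
      simp only [List.head?_cons, Option.some.injEq] at hh
      exact ⟨t, by rw [hh]⟩
  rw [h1]
  have h2 : ∀ l' : List S,
      (if FirstHitPath T s (s :: l') ∧ (s :: l').length ≤ n + 1
        then pathProb P (s :: l') else 0) ≤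
      ∑' s' : S, (if l'.head? = some s' then
        P s s' * (if FirstHitPath T s' l' ∧ l'.length ≤ n then pathProb P l' else 0)
        else 0) := by
    intro l'
    by_cases hc : FirstHitPath T s (s :: l') ∧ (s :: l').length ≤ n + 1
    · obtain ⟨⟨hh, hne, hlast, hmem⟩, hlen⟩ := id hc
      have hl'ne : l' ≠ [] := by
        rintro rfl
        exact hs (by simpa using hlast)
      obtain ⟨s', rest, rfl⟩ : ∃ a t, l' = a :: t := by
        cases l' with
        | nil => exact absurd rfl hl'ne
        | cons a t => exact ⟨a, t, rfl⟩
      have hfh : FirstHitPath T s' (s' :: rest) := by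
        refine ⟨rfl, List.cons_ne_nil _ _, ?_, fun i hi => ?_⟩
        · rwa [List.getLast_cons (List.cons_ne_nil _ _)] at hlast
        · have hlt : ((i : ℕ) + 1) + 1 < (s :: s' :: rest).length := by
            simp only [List.length_cons] at hi ⊢
            omega
          have := hmem ⟨(i : ℕ) + 1, by omega⟩ hlt
          simpa using this
      have hlen' : (s' :: rest).length ≤ n := by
        simp only [List.length_cons] at hlen ⊢
        omega
      calc (if FirstHitPath T s (s :: s' :: rest) ∧ (s :: s' :: rest).length ≤ n + 1
            then pathProb P (s :: s' :: rest) else 0)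
          = P s s' * pathProb P (s' :: rest) := by rw [if_pos hc]; rfl
        _ = (if (s' :: rest).head? = some s' then
              P s s' * (if FirstHitPath T s' (s' :: rest) ∧ (s' :: rest).length ≤ n
                then pathProb P (s' :: rest) else 0) else 0) := by
              rw [if_pos (show (s' :: rest).head? = some s' from rfl),
                if_pos ⟨hfh, hlen'⟩]
        _ ≤ _ := ENNReal.le_tsum s'
    · rw [if_neg hc]; exact zero_le
  calc (∑' l' : List S, if FirstHitPath T s (s :: l') ∧ (s :: l').length ≤ n + 1
          then pathProb P (s :: l') else 0)
      ≤ ∑' l' : List S, ∑' s' : S, (if l'.head? = some s' then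
          P s s' * (if FirstHitPath T s' l' ∧ l'.length ≤ n then pathProb P l' else 0)
          else 0) := ENNReal.tsum_le_tsum h2
    _ = ∑' s' : S, ∑' l' : List S, (if l'.head? = some s' then
          P s s' * (if FirstHitPath T s' l' ∧ l'.length ≤ n then pathProb P l' else 0)
          else 0) := ENNReal.tsum_comm
    _ ≤ ∑' s' : S, ∑' l' : List S,
          P s s' * (if FirstHitPath T s' l' ∧ l'.length ≤ n then pathProb P l' else 0) := by
        refine ENNReal.tsum_le_tsum fun s' => ENNReal.tsum_le_tsum fun l' => ?_
        by_cases h : l'.head? = some s'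
        · rw [if_pos h]
        · rw [if_neg h]; exact zero_le
    _ = ∑' s' : S, P s s' * fhAux P T n s' := by
        refine tsum_congr fun s' => ?_
        rw [fhAux, ENNReal.tsum_mul_left]

lemma reachProb_le_of_fhAux_le {P : S → S → ℝ≥0∞} {T : Set S} {s : S} {C : ℝ≥0∞}
    (h : ∀ n, fhAux P T n s ≤ C) : reachProb P T s ≤ C := by
  rw [reachProb_eq_tsum_ite, ENNReal.tsum_eq_iSup_sum]
  refine iSup_le fun A => ?_
  set n := A.sup List.length with hn
  calc (∑ l ∈ A, if FirstHitPath T s l then pathProb P l else 0)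
      ≤ ∑ l ∈ A, (if FirstHitPath T s l ∧ l.length ≤ n then pathProb P l else 0) := by
        refine Finset.sum_le_sum fun l hl => ?_
        by_cases hf : FirstHitPath T s l
        · rw [if_pos hf, if_pos ⟨hf, Finset.le_sup (f := List.length) hl⟩]
        · rw [if_neg hf]; exact zero_le
    _ ≤ fhAux P T n s := ENNReal.sum_le_tsum A
    _ ≤ C := h n

theorem stmt7 [Countable S] (P : S → S → ℝ≥0∞) (hP : IsStochastic P)
    (F : Set S) {S' : Type*} [Countable S']
    (P' : S' → S' → ℝ≥0∞) (hP' : IsStochastic P') (F' : Set S')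
    (α : SA P F → S') (habs : IsAbstraction P F P' F' α) :
    ∀ s : SA P F, reachProb P F s.val ≤ reachProb P' F' (α s) ∧
      0 < reachProb P' F' (α s) := by
  set G : S → ℝ≥0∞ := fun x =>
    if h : x ∉ Av P F then reachProb P' F' (α ⟨x, h⟩) else 0 with hG
  have key : ∀ n (t : SA P F), fhAux P F n t.val ≤ reachProb P' F' (α t) := by
    intro n
    induction n with
    | zero => intro t; rw [fhAux_zero]; exact zero_le
    | succ n ih =>
      intro t
      by_cases htF : t.val ∈ F
      · exact (fhAux_le_one_of_mem P (n + 1) htF).trans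
          (le_of_eq (reachProb_of_mem P' (habs.1 t htF)).symm)
      · calc fhAux P F (n + 1) t.val
            ≤ ∑' s' : S, P t.val s' * fhAux P F n s' := fhAux_step P n htF
          _ ≤ ∑' s' : S, P t.val s' * G s' := by
              refine ENNReal.tsum_le_tsum fun s' => mul_le_mul_right ?_ _
              by_cases h : s' ∉ Av P F
              · rw [hG]; simp only [dif_pos h]; exact ih ⟨s', h⟩
              · have hAv : reachProb P F s' = 0 := not_not.mp h
                calc fhAux P F n s' ≤ reachProb P F s' := fhAux_le_reachProb P F n s'
                  _ = 0 := hAv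
                  _ ≤ G s' := zero_le
          _ = ∑' s' : SA P F, P t.val s'.val * G s'.val := by
              refine (Function.Injective.tsum_eq Subtype.val_injective fun x hx => ?_).symm
              have hGx : G x ≠ 0 := by
                intro h0
                rw [Function.mem_support] at hx
                exact hx (by rw [h0, mul_zero])
              have hxA : x ∉ Av P F := by
                by_contra hc
                exact hGx (by rw [hG]; simp [hc])
              exact ⟨⟨x, hxA⟩, rfl⟩
          _ = ∑' s' : SA P F, P t.val s'.val * reachProb P' F' (α s') := by
              refine tsum_congr fun s' => ?_
              rw [hG]
              simp only [dif_pos s'.2]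
          _ ≤ reachProb P' F' (α t) := habs.2 t htF
  intro s
  have hle : reachProb P F s.val ≤ reachProb P' F' (α s) :=
    reachProb_le_of_fhAux_le fun n => key n s
  have hpos : 0 < reachProb P F s.val := pos_iff_ne_zero.mpr s.2
  exact ⟨hle, lt_of_lt_of_le hpos hle⟩

end Thms
end

section
/- With C' the biased Markov chain of an abstraction (C,F) →^α (C^•,F^•) as above, for every finite path ρ in C' starting at s with positive probability in C' whose last state is not s₋, the probabilities satisfy Pr_C(ρ) = Pr_{C'}(ρ) · μ^•(α(s)) / μ^•(α(last(ρ))). -/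
open scoped ENNReal NNReal BigOperators
open Filter

open scoped Classical

section Thms

variable {S : Type*}

/-! ### Auxiliary lemmas -/

lemma pathProb_single (P : S → S → ℝ≥0∞) (a : S) : pathProb P [a] = 1 := rfl

lemma pathProb_cons_cons (P : S → S → ℝ≥0∞) (a b : S) (l : List S) :
    pathProb P (a :: b :: l) = P a b * pathProb P (b :: l) := rfl

lemma fhp_shape {T : Set S} {s : S} {l : List S} (h : FirstHitPath T s l) :
    l = s :: l.tail := by
  obtain ⟨h1, -⟩ := h
  cases l with
  | nil => simp at h1
  | cons a t => simp only [List.head?] at h1; simp [Option.some.inj h1]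

lemma fhp_singleton_iff {T : Set S} {s a : S} :
    FirstHitPath T s [a] ↔ a = s ∧ a ∈ T := by
  constructor
  · rintro ⟨h1, h2, h3, -⟩
    refine ⟨Option.some.inj h1, ?_⟩
    simpa using h3
  · rintro ⟨rfl, hT⟩
    refine ⟨rfl, List.cons_ne_nil _ _, by simpa using hT, ?_⟩
    rintro ⟨i, hi⟩ hlt
    simp only [List.length_cons, List.length_nil] at hlt
    omega

lemma fhp_cons_cons {T : Set S} {s a b : S} {t : List S} :
    FirstHitPath T s (a :: b :: t) ↔ s = a ∧ a ∉ T ∧ FirstHitPath T b (b :: t) := by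
  constructor
  · rintro ⟨h1, h2, h3, h4⟩
    refine ⟨(Option.some.inj h1).symm, ?_, rfl, List.cons_ne_nil _ _, ?_, ?_⟩
    · have := h4 ⟨0, by simp⟩ (by simp)
      simpa using this
    · simpa using h3
    · rintro ⟨i, hi⟩ hlt
      have := h4 ⟨i + 1, by simpa using Nat.succ_lt_succ hi⟩
        (by simp only [List.length_cons] at hlt ⊢; omega)
      simpa using this
  · rintro ⟨rfl, haT, hh, hn, h3, h4⟩
    refine ⟨rfl, List.cons_ne_nil _ _, by simpa using h3, ?_⟩
    rintro ⟨i, hi⟩ hlt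
    cases i with
    | zero => simpa using haT
    | succ j =>
      have hj : j < (b :: t).length := by
        simp only [List.length_cons] at hi ⊢; omega
      have := h4 ⟨j, hj⟩ (by simp only [List.length_cons] at hlt ⊢; omega)
      simpa using this

/-- Single step of a ℝ≥0∞-tsum which is ≤ 1 on a subsingleton family of values ≤ 1. -/
lemma tsum_subsingleton_le {ι : Sort _} (f : ι → ℝ≥0∞) (hsub : ∀ a b : ι, a = b)
    (hf : ∀ a, f a ≤ 1) : ∑' a, f a ≤ 1 := by
  rcases isEmpty_or_nonempty (PLift ι) with h | ⟨⟨x⟩⟩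
  · have : IsEmpty ι := ⟨fun a => h.elim ⟨a⟩⟩
    rw [tsum_empty]; exact zero_le_one
  · rw [tsum_eq_single x.down (fun b hb => absurd (hsub b x.down) hb)]
    exact hf x.down

/-- Bounded-horizon reach sums. -/
noncomputable def Bnd (P : S → S → ℝ≥0∞) (T : Set S) (n : ℕ) (s : S) : ℝ≥0∞ :=
  ∑' t : {t : List S // FirstHitPath T s (s :: t) ∧ t.length ≤ n},
    pathProb P (s :: (t : List S))

lemma Bnd_le_one {P : S → S → ℝ≥0∞} (hP : IsStochastic P) (T : Set S) :
    ∀ n s, Bnd P T n s ≤ 1 := by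
  intro n
  induction n with
  | zero =>
    intro s
    refine tsum_subsingleton_le _ (fun a b => ?_) (fun a => ?_)
    · apply Subtype.ext
      have ha : a.val = [] := List.length_eq_zero_iff.mp (Nat.le_zero.mp a.2.2)
      have hb : b.val = [] := List.length_eq_zero_iff.mp (Nat.le_zero.mp b.2.2)
      rw [ha, hb]
    · have ha : a.val = [] := List.length_eq_zero_iff.mp (Nat.le_zero.mp a.2.2)
      rw [ha, pathProb_single]
  | succ n ih =>
    intro s
    by_cases hs : s ∈ T
    · refine tsum_subsingleton_le _ (fun a b => ?_) (fun a => ?_)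
      · have key : ∀ c : {t : List S // FirstHitPath T s (s :: t) ∧ t.length ≤ n + 1},
            c.val = [] := by
          rintro ⟨(_ | ⟨c0, ct⟩), hc, hlen⟩
          · rfl
          · exact absurd hs (fhp_cons_cons.mp hc).2.1
        apply Subtype.ext
        rw [key a, key b]
      · rcases a with ⟨(_ | ⟨c0, ct⟩), hc, hlen⟩
        · rw [pathProb_single]
        · exact absurd hs (fhp_cons_cons.mp hc).2.1
    · -- every path has a nonempty tail; decompose
      haveI : Inhabited S := ⟨s⟩
      have hshape : ∀ x : {t : List S // FirstHitPath T s (s :: t) ∧ t.length ≤ n + 1},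
          x.val = x.val.headI :: x.val.tail := by
        rintro ⟨(_ | ⟨b, t'⟩), hc, hlen⟩
        · exact absurd (fhp_singleton_iff.mp hc).2 hs
        · rfl
      have hpf : ∀ x : {t : List S // FirstHitPath T s (s :: t) ∧ t.length ≤ n + 1},
          FirstHitPath T x.val.headI (x.val.headI :: x.val.tail) ∧
            x.val.tail.length ≤ n := by
        rintro ⟨(_ | ⟨b, t'⟩), hc, hlen⟩
        · exact absurd (fhp_singleton_iff.mp hc).2 hs
        · have := fhp_cons_cons.mp hc
          refine ⟨this.2.2, ?_⟩
          simpa using Nat.succ_le_succ_iff.mp hlen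
      set e : {t : List S // FirstHitPath T s (s :: t) ∧ t.length ≤ n + 1} →
          Σ b : S, {t' : List S // FirstHitPath T b (b :: t') ∧ t'.length ≤ n} :=
        fun x => ⟨x.val.headI, ⟨x.val.tail, hpf x⟩⟩ with he
      have hproj : ∀ x, (e x).1 :: (e x).2.val = x.val := fun x => (hshape x).symm
      have hinj : Function.Injective e := by
        intro x y hxy
        apply Subtype.ext
        rw [← hproj x, ← hproj y, hxy]
      have hle : Bnd P T (n + 1) s ≤
          ∑' σ : Σ b : S, {t' : List S // FirstHitPath T b (b :: t') ∧ t'.length ≤ n},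
            P s σ.1 * pathProb P (σ.1 :: (σ.2 : List S)) := by
        refine ENNReal.summable.tsum_le_tsum_of_inj e hinj (fun _ _ => zero_le) (fun x => ?_)
          ENNReal.summable
        have : pathProb P (s :: x.val) = P s (e x).1 * pathProb P ((e x).1 :: (e x).2.val) := by
          conv_lhs => rw [← hproj x]
          rw [pathProb_cons_cons]
        exact le_of_eq this
      refine hle.trans ?_
      rw [ENNReal.tsum_sigma fun b (t' : {t' : List S // FirstHitPath T b (b :: t') ∧
        t'.length ≤ n}) => P s b * pathProb P (b :: (t' : List S))]
      calc ∑' b : S, ∑' t' : {t' : List S // FirstHitPath T b (b :: t') ∧ t'.length ≤ n},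
              P s b * pathProb P (b :: (t' : List S))
          = ∑' b : S, P s b * Bnd P T n b := by
            refine tsum_congr fun b => ?_
            rw [Bnd, ENNReal.tsum_mul_left]
        _ ≤ ∑' b : S, P s b := by
            refine ENNReal.tsum_le_tsum fun b => ?_
            calc P s b * Bnd P T n b ≤ P s b * 1 := mul_le_mul_right (ih b) _
              _ = P s b := mul_one _
        _ = 1 := hP s

lemma reach_le_one {P : S → S → ℝ≥0∞} (hP : IsStochastic P) (T : Set S) (s : S) :
    reachProb P T s ≤ 1 := by
  rw [reachProb, ENNReal.tsum_eq_iSup_sum]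
  refine iSup_le fun Fs => ?_
  set N := Fs.sup (fun x => x.val.tail.length) with hN
  have hpf : ∀ x : Fs, FirstHitPath T s (s :: x.val.val.tail) ∧
      x.val.val.tail.length ≤ N := by
    rintro ⟨⟨l, hl⟩, hmem⟩
    constructor
    · have := fhp_shape hl
      rw [← this]; exact hl
    · exact Finset.le_sup (f := fun x => x.val.tail.length) hmem
  set e : Fs → {t : List S // FirstHitPath T s (s :: t) ∧ t.length ≤ N} :=
    fun x => ⟨x.val.val.tail, hpf x⟩ with he
  have hinj : Function.Injective e := by
    intro x y hxy
    have hx := fhp_shape x.val.2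
    have hy := fhp_shape y.val.2
    apply Subtype.ext; apply Subtype.ext
    rw [hx, hy]
    exact congrArg (s :: ·) (congrArg Subtype.val hxy)
  have : ∑ x ∈ Fs, pathProb P x.val = ∑' x : Fs, pathProb P x.val.val :=
    (Finset.tsum_subtype Fs fun x => pathProb P x.val).symm
  rw [this]
  have hle : ∑' x : Fs, pathProb P x.val.val ≤ Bnd P T N s := by
    rw [Bnd]
    refine ENNReal.summable.tsum_le_tsum_of_inj e hinj (fun _ _ => zero_le) (fun x => ?_)
      ENNReal.summable
    have := fhp_shape x.val.2
    exact le_of_eq (by conv_lhs => rw [this])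
  exact hle.trans (Bnd_le_one hP T N s)

lemma mu_ne_zero {P : S → S → ℝ≥0∞} {F : Set S} {S' : Type*}
    {P' : S' → S' → ℝ≥0∞} {F' : Set S'} {α : SA P F → S'}
    (habs : IsAbstraction P F P' F' α) (s : SA P F) :
    reachProb P' F' (α s) ≠ 0 := by
  have key : ∀ (l : List S) (s : SA P F), FirstHitPath F s.val l → pathProb P l ≠ 0 →
      reachProb P' F' (α s) ≠ 0 := by
    intro l
    induction l with
    | nil =>
      rintro s ⟨-, h, -⟩ -
      exact absurd rfl h
    | cons a t ih =>
      intro s hf hp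
      by_cases hsF : s.val ∈ F
      · have h1 : FirstHitPath F' (α s) [α s] := fhp_singleton_iff.mpr ⟨rfl, habs.1 s hsF⟩
        have h2 : (1 : ℝ≥0∞) ≤ reachProb P' F' (α s) := by
          have := ENNReal.le_tsum (f := fun l : {l : List S' // FirstHitPath F' (α s) l} =>
            pathProb P' (l : List S')) ⟨[α s], h1⟩
          rw [reachProb]
          simpa [pathProb_single] using this
        intro h0
        rw [h0] at h2
        exact absurd h2 (by simp)
      · cases t with
        | nil =>
          obtain ⟨ha, hT⟩ := fhp_singleton_iff.mp hf
          exact absurd (ha ▸ hT) hsF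
        | cons b t' =>
          obtain ⟨has, -, hfb⟩ := fhp_cons_cons.mp hf
          rw [pathProb_cons_cons] at hp
          have hp1 : P a b ≠ 0 := fun h => hp (by rw [h, zero_mul])
          have hp2 : pathProb P (b :: t') ≠ 0 := fun h => hp (by rw [h, mul_zero])
          have hbAv : b ∉ Av P F := by
            intro hb
            have hb' : reachProb P F b = 0 := hb
            have hle : pathProb P (b :: t') ≤ reachProb P F b := by
              rw [reachProb]
              exact ENNReal.le_tsum (f := fun l : {l : List S // FirstHitPath F b l} =>
                pathProb P (l : List S)) ⟨b :: t', hfb⟩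
            rw [hb'] at hle
            exact hp2 (le_antisymm hle zero_le)
          have ihb := ih ⟨b, hbAv⟩ hfb hp2
          have hle := habs.2 s hsF
          have hterm : P s.val b * reachProb P' F' (α ⟨b, hbAv⟩) ≤
              ∑' s' : SA P F, P s.val s'.val * reachProb P' F' (α s') :=
            ENNReal.le_tsum (f := fun s' : SA P F =>
              P s.val s'.val * reachProb P' F' (α s')) ⟨b, hbAv⟩
          intro h0
          rw [h0] at hle
          have : P s.val b * reachProb P' F' (α ⟨b, hbAv⟩) = 0 :=
            le_antisymm (hterm.trans hle) zero_le
          rcases mul_eq_zero.mp this with h | h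
          · rw [has] at h; exact hp1 h
          · exact ihb h
  have hs := s.2
  have hex : ∃ l : {l : List S // FirstHitPath F s.val l}, pathProb P (l : List S) ≠ 0 := by
    by_contra h
    push_neg at h
    exact hs (show reachProb P F s.val = 0 from ENNReal.tsum_eq_zero.mpr h)
  obtain ⟨⟨l, hl⟩, hp⟩ := hex
  exact key l s hl hp

lemma enn_arith (A Q x y z : ℝ≥0∞) (hx0 : x ≠ 0) (hxt : x ≠ ⊤) :
    A * (Q * y / z) = A * y / x * Q * x / z := by
  have h : x⁻¹ * x = 1 := ENNReal.inv_mul_cancel hx0 hxt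
  rw [div_eq_mul_inv, div_eq_mul_inv, div_eq_mul_inv]
  calc A * (Q * y * z⁻¹) = A * y * Q * z⁻¹ * (x⁻¹ * x) := by rw [h, mul_one]; ring
    _ = A * y * x⁻¹ * Q * x * z⁻¹ := by ring

theorem stmt9 [Countable S] (P : S → S → ℝ≥0∞) (hP : IsStochastic P)
    (F : Set S) {S' : Type*} [Countable S']
    (P' : S' → S' → ℝ≥0∞) (hP' : IsStochastic P') (F' : Set S')
    (α : SA P F → S') (habs : IsAbstraction P F P' F' α)
    (s : SA P F) (l : List (SA P F)) (hne : l ≠ [])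
    (hhead : l.head? = some s)
    (hpos : 0 < pathProb (biasedKernel P F P' F' α) (l.map some)) :
    pathProb P (l.map Subtype.val) =
      pathProb (biasedKernel P F P' F' α) (l.map some) *
        reachProb P' F' (α s) / reachProb P' F' (α (l.getLast hne)) := by
  have hfin : ∀ u : SA P F, reachProb P' F' (α u) ≠ ⊤ := fun u =>
    ((reach_le_one hP' F' (α u)).trans_lt ENNReal.one_lt_top).ne
  have hnz : ∀ u : SA P F, reachProb P' F' (α u) ≠ 0 := fun u => mu_ne_zero habs u
  induction l generalizing s with
  | nil => exact absurd rfl hne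
  | cons a t IH =>
    have has : a = s := by simpa using hhead
    subst has
    cases t with
    | nil =>
      simp only [List.map_cons, List.map_nil, List.getLast_singleton']
      rw [pathProb_single, pathProb_single, one_mul,
        ENNReal.div_self (hnz a) (hfin a)]
    | cons b t' =>
      have hpos2 : 0 < pathProb (biasedKernel P F P' F' α) ((b :: t').map some) := by
        simp only [List.map_cons] at hpos
        rw [pathProb_cons_cons] at hpos
        simp only [List.map_cons]
        exact pos_iff_ne_zero.mpr fun h => by simp [h] at hpos
      have IH' := IH b (List.cons_ne_nil _ _) rfl hpos2
      have hgl : (a :: b :: t').getLast hne = (b :: t').getLast (List.cons_ne_nil _ _) :=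
        List.getLast_cons_cons
      rw [hgl]
      simp only [List.map_cons] at IH' ⊢
      rw [pathProb_cons_cons, pathProb_cons_cons]
      rw [IH']
      have hker : biasedKernel P F P' F' α (some a) (some b) =
          P a.val b.val * reachProb P' F' (α b) / reachProb P' F' (α a) := rfl
      rw [hker]
      exact enn_arith _ _ _ _ _ (hnz a) (hfin a)

end Thms
end
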